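/- arXiv:2007.13915 — 8 statements merged into one kernel-verified Lean document; each statement's English description precedes it below -/
import Mathlib

section
/- Let $w_\delta$ be a $\mathbf{C}^1$ function on $[0,\delta]$ that is nonnegative, non-increasing, non-constant, and satisfies $\int_0^\delta w_\delta(s)\,ds = 1$. Define $\nu(\delta) = \int_0^\delta s\,w_\delta(s)\,ds$ and $b_\delta(k) = \frac{1}{\nu(\delta)}\int_0^\delta \sin(2\pi k s)\,w_\delta(s)\,ds$. Then for every integer $k \geq 1$, $2\pi k\, b_\delta(k) > 0$. -/
open Real Set MeasureTheory intervalIntegral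

theorem stmt0 (δ : ℝ) (hδ : 0 < δ) (w : ℝ → ℝ)
    (hw : ContDiffOn ℝ 1 w (Icc 0 δ))
    (hpos : ∀ s ∈ Icc 0 δ, 0 ≤ w s)
    (hmono : AntitoneOn w (Icc 0 δ))
    (hnc : w δ < w 0)
    (hnorm : (∫ s in (0:ℝ)..δ, w s) = 1) :
    ∀ k : ℕ, 1 ≤ k →
      0 < 2 * π * k *
        ((1 / (∫ s in (0:ℝ)..δ, s * w s)) *
          ∫ s in (0:ℝ)..δ, Real.sin (2 * π * k * s) * w s) := by
  intro k hk
  have hk' : (1:ℝ) ≤ (k:ℝ) := by exact_mod_cast hk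
  set a : ℝ := 2 * π * (k:ℝ) with ha_def
  have ha : 0 < a := by
    have := Real.pi_pos
    nlinarith
  have hwc : ContinuousOn w (Icc 0 δ) := hw.continuousOn
  -- ν > 0
  have hw0 : 0 < w 0 := lt_of_le_of_lt (hpos δ ⟨hδ.le, le_rfl⟩) hnc
  have hν : 0 < ∫ s in (0:ℝ)..δ, s * w s := by
    have hmem : w ⁻¹' (Ioi 0) ∈ nhdsWithin 0 (Icc 0 δ) :=
      (hwc 0 ⟨le_rfl, hδ.le⟩) (Ioi_mem_nhds hw0)
    rw [Metric.mem_nhdsWithin_iff] at hmem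
    obtain ⟨ε, hε, hsub⟩ := hmem
    set c : ℝ := min (ε/2) δ with hc_def
    have hc0 : 0 < c := lt_min (by linarith) hδ
    have hcδ : c ≤ δ := min_le_right _ _
    have hcball : c ∈ Metric.ball (0:ℝ) ε ∩ Icc 0 δ := by
      constructor
      · simp only [Metric.mem_ball, Real.dist_eq, sub_zero]
        rw [abs_of_pos hc0]
        calc c ≤ ε/2 := min_le_left _ _
          _ < ε := by linarith
      · exact ⟨hc0.le, hcδ⟩
    have hwc_pos : 0 < w c := hsub hcball
    have hlt := intervalIntegral.integral_lt_integral_of_continuousOn_of_le_of_exists_lt hδ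
      continuousOn_const (continuousOn_id.mul hwc)
      (f := fun _ => (0:ℝ))
      (fun x hx => mul_nonneg hx.1.le (hpos x ⟨hx.1.le, hx.2⟩))
      ⟨c, ⟨hc0.le, hcδ⟩, mul_pos hc0 hwc_pos⟩
    simpa using hlt
  -- derivative
  set g : ℝ → ℝ := fun s => derivWithin w (Icc 0 δ) s with hg_def
  have hUD : UniqueDiffOn ℝ (Icc (0:ℝ) δ) := uniqueDiffOn_Icc hδ
  have hgderiv : ∀ x ∈ Icc (0:ℝ) δ, HasDerivWithinAt w (g x) (Icc 0 δ) x := by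
    intro x hx
    exact ((hw.differentiableOn one_ne_zero) x hx).hasDerivWithinAt
  have hgc : ContinuousOn g (Icc 0 δ) := hw.continuousOn_derivWithin hUD le_rfl
  have hgi : IntervalIntegrable g volume 0 δ := by
    apply ContinuousOn.intervalIntegrable
    rwa [uIcc_of_le hδ.le]
  -- FTC: ∫ g = w δ - w 0
  have hftc : (∫ s in (0:ℝ)..δ, g s) = w δ - w 0 := by
    apply intervalIntegral.integral_eq_sub_of_hasDeriv_right_of_le hδ.le hwc _ hgi
    intro x hx
    exact ((hgderiv x ⟨hx.1.le, hx.2.le⟩).hasDerivAt (Icc_mem_nhds hx.1 hx.2)).hasDerivWithinAt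
  -- g nonpositive on Ioc
  have hg_nonpos : ∀ x ∈ Ioc (0:ℝ) δ, g x ≤ 0 := by
    intro x hx
    have hxI : x ∈ Icc (0:ℝ) δ := ⟨hx.1.le, hx.2⟩
    have h := hgderiv x hxI
    rw [hasDerivWithinAt_iff_tendsto_slope] at h
    have hsub : Ico (0:ℝ) x ⊆ Icc 0 δ \ {x} := by
      intro y hy
      exact ⟨⟨hy.1, hy.2.le.trans hx.2⟩, ne_of_lt hy.2⟩
    have h' : Filter.Tendsto (slope w x) (nhdsWithin x (Ico 0 x)) (nhds (g x)) :=
      h.mono_left (nhdsWithin_mono x hsub)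
    have : Filter.NeBot (nhdsWithin x (Ico 0 x)) := right_nhdsWithin_Ico_neBot hx.1
    refine le_of_tendsto h' (eventually_nhdsWithin_of_forall ?_)
    intro y hy
    have hyI : y ∈ Icc (0:ℝ) δ := ⟨hy.1, hy.2.le.trans hx.2⟩
    rw [slope_def_field]
    exact div_nonpos_of_nonneg_of_nonpos (by linarith [hmono hyI hxI hy.2.le]) (by linarith [hy.2])
  -- a point where g < 0
  have hx₀ : ∃ x₀ ∈ Icc (0:ℝ) δ, g x₀ < 0 := by
    by_contra hcon
    push_neg at hcon
    have : 0 ≤ ∫ s in (0:ℝ)..δ, g s := by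
      apply intervalIntegral.integral_nonneg hδ.le
      intro u hu
      exact hcon u hu
    rw [hftc] at this
    linarith
  obtain ⟨x₀, hx₀I, hgx₀⟩ := hx₀
  -- a point where g < 0 ∧ cos (a c) < 1
  have hpoint : ∃ c ∈ Icc (0:ℝ) δ, g c < 0 ∧ Real.cos (a * c) < 1 := by
    have hmem : g ⁻¹' (Iio 0) ∈ nhdsWithin x₀ (Icc 0 δ) :=
      (hgc x₀ hx₀I) (Iio_mem_nhds hgx₀)
    rw [Metric.mem_nhdsWithin_iff] at hmem
    obtain ⟨ε, hε, hsub⟩ := hmem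
    by_cases hcos : Real.cos (a * x₀) < 1
    · exact ⟨x₀, hx₀I, hgx₀, hcos⟩
    · have hcos1 : Real.cos (a * x₀) = 1 :=
        le_antisymm (Real.cos_le_one _) (not_lt.mp hcos)
      have hsin0 : Real.sin (a * x₀) = 0 := by
        have := Real.sin_sq_add_cos_sq (a * x₀)
        nlinarith [sq_nonneg (Real.sin (a * x₀))]
      set η : ℝ := min (ε/2) (min (δ/2) (1/(4*(k:ℝ)))) with hη_def
      have hη0 : 0 < η := by
        apply lt_min (by linarith)
        apply lt_min (by linarith)
        positivity
      have hηε : η < ε := lt_of_le_of_lt (min_le_left _ _) (by linarith)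
      have hηδ : η ≤ δ/2 := le_trans (min_le_right _ _) (min_le_left _ _)
      have hηk : η ≤ 1/(4*(k:ℝ)) := le_trans (min_le_right _ _) (min_le_right _ _)
      have haη : 0 < a * η := mul_pos ha hη0
      have haη2 : a * η < 2 * π := by
        have hπ := Real.pi_pos
        have : a * η ≤ 2 * π * (k:ℝ) * (1/(4*(k:ℝ))) := by
          apply mul_le_mul_of_nonneg_left hηk ha.le
        have hkpos : (0:ℝ) < (k:ℝ) := by linarith
        rw [ha_def] at this ⊢
        calc 2 * π * (k:ℝ) * η ≤ 2 * π * (k:ℝ) * (1/(4*(k:ℝ))) := this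
          _ = π / 2 := by field_simp; ring
          _ < 2 * π := by linarith
      have hcosη : Real.cos (a * η) < 1 := by
        refine lt_of_le_of_ne (Real.cos_le_one _) ?_
        intro h
        rw [Real.cos_eq_one_iff_of_lt_of_lt (by linarith) haη2] at h
        exact haη.ne' h
      rcases le_or_gt (x₀ + η) δ with hcase | hcase
      · refine ⟨x₀ + η, ⟨by linarith [hx₀I.1], hcase⟩, ?_, ?_⟩
        · apply hsub
          constructor
          · simp only [Metric.mem_ball, Real.dist_eq]
            rw [show x₀ + η - x₀ = η by ring, abs_of_pos hη0]
            exact hηε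
          · exact ⟨by linarith [hx₀I.1], hcase⟩
        · rw [mul_add, Real.cos_add, hcos1, hsin0]
          simpa using hcosη
      · have hx₀η : η ≤ x₀ := by linarith [hx₀I.2]
        refine ⟨x₀ - η, ⟨by linarith, by linarith [hx₀I.2]⟩, ?_, ?_⟩
        · apply hsub
          constructor
          · simp only [Metric.mem_ball, Real.dist_eq]
            rw [show x₀ - η - x₀ = -η by ring, abs_neg, abs_of_pos hη0]
            exact hηε
          · exact ⟨by linarith, by linarith [hx₀I.2]⟩
        · rw [mul_sub, Real.cos_sub, hcos1, hsin0]
          simpa using hcosη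
  obtain ⟨c, hcI, hgc0, hcosc⟩ := hpoint
  -- strict inequality ∫ g < ∫ cos(a s) g s
  have hcomp : (∫ s in (0:ℝ)..δ, g s) < ∫ s in (0:ℝ)..δ, Real.cos (a * s) * g s := by
    apply intervalIntegral.integral_lt_integral_of_continuousOn_of_le_of_exists_lt hδ hgc
    · exact (Real.continuous_cos.comp (continuous_const.mul continuous_id)).continuousOn.mul hgc
    · intro x hx
      have := hg_nonpos x hx
      nlinarith [Real.cos_le_one (a * x)]
    · exact ⟨c, hcI, by nlinarith⟩
  -- integration by parts
  set I : ℝ := ∫ s in (0:ℝ)..δ, Real.sin (a * s) * w s with hI_def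
  set J : ℝ := ∫ s in (0:ℝ)..δ, Real.cos (a * s) * g s with hJ_def
  have hvderiv : ∀ x : ℝ, HasDerivAt (fun s => -Real.cos (a * s) / a) (Real.sin (a * x)) x := by
    intro x
    have h1 : HasDerivAt (fun s : ℝ => a * s) a x := by
      simpa using (hasDerivAt_id x).const_mul a
    have h2 : HasDerivAt (fun s : ℝ => Real.cos (a * s)) (-Real.sin (a * x) * a) x :=
      (Real.hasDerivAt_cos (a * x)).comp x h1
    have h3 := (h2.neg).div_const a
    refine h3.congr_deriv ?_
    rw [neg_mul, neg_neg, mul_div_assoc, div_self ha.ne', mul_one]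
  have hibp : I = w δ * (-Real.cos (a * δ) / a) - w 0 * (-Real.cos (a * 0) / a)
      - ∫ s in (0:ℝ)..δ, g s * (-Real.cos (a * s) / a) := by
    rw [hI_def]
    have := intervalIntegral.integral_mul_deriv_eq_deriv_mul_of_hasDerivWithinAt
      (u := w) (v := fun s => -Real.cos (a * s) / a) (u' := g)
      (v' := fun s => Real.sin (a * s)) (a := (0:ℝ)) (b := δ)
      (fun x hx => by
        rw [uIcc_of_le hδ.le]
        exact hgderiv x (by rwa [uIcc_of_le hδ.le] at hx))
      (fun x _ => (hvderiv x).hasDerivWithinAt)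
      hgi
      (by apply ContinuousOn.intervalIntegrable
          exact (Real.continuous_sin.comp (continuous_const.mul continuous_id)).continuousOn)
    simp_rw [mul_comm (Real.sin (a * _))] at *
    exact this
  have hrw : (∫ s in (0:ℝ)..δ, g s * (-Real.cos (a * s) / a)) = -(1/a) * J := by
    rw [hJ_def, ← intervalIntegral.integral_const_mul]
    apply intervalIntegral.integral_congr
    intro x _
    ring
  have haI : a * I = w 0 - Real.cos (a * δ) * w δ + J := by
    rw [hibp, hrw, mul_zero, Real.cos_zero]
    field_simp
    ring
  -- conclude
  have hwδ : 0 ≤ w δ := hpos δ ⟨hδ.le, le_rfl⟩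
  have hcosδ : Real.cos (a * δ) ≤ 1 := Real.cos_le_one _
  have haIpos : 0 < a * I := by
    rw [haI]
    rw [hftc] at hcomp
    nlinarith
  have hIpos : 0 < I := by nlinarith
  show 0 < a * ((1 / (∫ s in (0:ℝ)..δ, s * w s)) * I)
  have h1ν : 0 < 1 / (∫ s in (0:ℝ)..δ, s * w s) := by positivity
  exact mul_pos ha (mul_pos h1ν hIpos)
end

section
/- Let $w_\delta$ be a $\mathbf{C}^1$ function on $[0,\delta]$ that is nonnegative, non-increasing, non-constant, with $\int_0^\delta w_\delta = 1$, and let $b_\delta(k) = \frac{1}{\nu(\delta)}\int_0^\delta \sin(2\pi k s) w_\delta(s)\,ds$ where $\nu(\delta) = \int_0^\delta s\,w_\delta(s)\,ds$. Then $\liminf_{k\to\infty} 2\pi k\, b_\delta(k) \geq \frac{1}{\nu(\delta)}\left[w_\delta(0) - w_\delta(\delta)\right] > 0$. -/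
open Real Set MeasureTheory intervalIntegral Filter

private lemma nu_pos (δ : ℝ) (hδ : 0 < δ) (w : ℝ → ℝ)
    (hw : ContDiffOn ℝ 1 w (Icc 0 δ))
    (hpos : ∀ s ∈ Icc 0 δ, 0 ≤ w s)
    (hmono : AntitoneOn w (Icc 0 δ))
    (hnorm : (∫ s in (0:ℝ)..δ, w s) = 1) :
    0 < ∫ s in (0:ℝ)..δ, s * w s := by
  have hcont : ContinuousOn w (Icc 0 δ) := hw.continuousOn
  have hint : ∀ a b, a ∈ Icc 0 δ → b ∈ Icc 0 δ → IntervalIntegrable (fun s => s * w s) volume a b := by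
    intro a b ha hb
    apply ContinuousOn.intervalIntegrable
    apply (continuousOn_id.mul hcont).mono
    exact uIcc_subset_Icc ha hb
  have hex : ∃ s0 ∈ Ioo (0:ℝ) δ, 0 < w s0 := by
    by_contra h
    push_neg at h
    have hz : ∀ s ∈ Ioo (0:ℝ) δ, w s = 0 := fun s hs =>
      le_antisymm (h s hs) (hpos s (Ioo_subset_Icc_self hs))
    have : (∫ s in (0:ℝ)..δ, w s) = 0 := by
      rw [intervalIntegral.integral_of_le hδ.le]
      rw [MeasureTheory.setIntegral_congr_ae measurableSet_Ioc (g := fun _ => (0:ℝ)) ?_]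
      · simp
      · filter_upwards [compl_mem_ae_iff.2 (Real.volume_singleton (a := δ))] with s hsne hs
        exact hz s ⟨hs.1, lt_of_le_of_ne hs.2 hsne⟩
    rw [this] at hnorm; norm_num at hnorm
  obtain ⟨s0, hs0, hws0⟩ := hex
  have h1 : 0 < ∫ s in (0:ℝ)..s0, s * w s := by
    apply intervalIntegral.intervalIntegral_pos_of_pos_on (hint 0 s0 (left_mem_Icc.2 hδ.le) ⟨hs0.1.le, hs0.2.le⟩) _ hs0.1
    intro x hx
    have hwx : w s0 ≤ w x := hmono ⟨hx.1.le, (hx.2.trans hs0.2).le⟩ ⟨hs0.1.le, hs0.2.le⟩ hx.2.le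
    exact mul_pos hx.1 (lt_of_lt_of_le hws0 hwx)
  have h2 : 0 ≤ ∫ s in s0..δ, s * w s := by
    apply intervalIntegral.integral_nonneg hs0.2.le
    intro x hx
    exact mul_nonneg (hs0.1.le.trans hx.1) (hpos x ⟨hs0.1.le.trans hx.1, hx.2⟩)
  have := intervalIntegral.integral_add_adjacent_intervals (hint 0 s0 (left_mem_Icc.2 hδ.le) ⟨hs0.1.le, hs0.2.le⟩) (hint s0 δ ⟨hs0.1.le, hs0.2.le⟩ (right_mem_Icc.2 hδ.le))
  rw [← this]
  linarith

private lemma ibp (δ : ℝ) (hδ : 0 < δ) (w : ℝ → ℝ)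
    (hw : ContDiffOn ℝ 1 w (Icc 0 δ)) (c : ℝ) :
    c * ∫ s in (0:ℝ)..δ, Real.sin (c * s) * w s
      = w 0 - Real.cos (c * δ) * w δ
        + ∫ s in (0:ℝ)..δ, Real.cos (c * s) * derivWithin w (Icc 0 δ) s := by
  set w' := derivWithin w (Icc 0 δ) with hw'def
  have hu : UniqueDiffOn ℝ (Icc (0:ℝ) δ) := uniqueDiffOn_Icc hδ
  have hcont : ContinuousOn w (Icc 0 δ) := hw.continuousOn
  have hcont' : ContinuousOn w' (Icc 0 δ) := hw.continuousOn_derivWithin hu le_rfl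
  have hderiv : ∀ x ∈ Ioo (0:ℝ) δ, HasDerivAt w (w' x) x := by
    intro x hx
    have hmem : Icc (0:ℝ) δ ∈ nhds x := Icc_mem_nhds hx.1 hx.2
    have := (hw.differentiableOn one_ne_zero x (Ioo_subset_Icc_self hx)).hasDerivWithinAt
    exact this.hasDerivAt hmem
  have hF : ∀ x ∈ Ioo (0:ℝ) δ, HasDerivAt (fun s => -(Real.cos (c * s)) * w s)
      (c * Real.sin (c * x) * w x + (-(Real.cos (c * x))) * w' x) x := by
    intro x hx
    have h1 : HasDerivAt (fun s => -(Real.cos (c * s))) (c * Real.sin (c * x)) x := by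
      have := (Real.hasDerivAt_cos (c * x)).comp x ((hasDerivAt_id x).const_mul c)
      simpa [mul_comm, Function.comp_def, Pi.neg_def] using this.neg
    exact h1.mul (hderiv x hx)
  have hint1 : IntervalIntegrable (fun s => c * Real.sin (c * s) * w s) volume 0 δ := by
    apply ContinuousOn.intervalIntegrable
    apply ContinuousOn.mul (Continuous.continuousOn (continuous_const.mul (Real.continuous_sin.comp (continuous_const.mul continuous_id)))) (hcont.mono ?_)
    rw [uIcc_of_le hδ.le]
  have hint2 : IntervalIntegrable (fun s => (-(Real.cos (c * s))) * w' s) volume 0 δ := by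
    apply ContinuousOn.intervalIntegrable
    apply ContinuousOn.mul (Continuous.continuousOn ((Real.continuous_cos.comp (continuous_const.mul continuous_id)).neg)) (hcont'.mono ?_)
    rw [uIcc_of_le hδ.le]
  have key := intervalIntegral.integral_eq_sub_of_hasDerivAt_of_le hδ.le
    (by exact ContinuousOn.mul (Continuous.continuousOn ((Real.continuous_cos.comp (continuous_const.mul continuous_id)).neg)) hcont) hF
    (hint1.add hint2)
  rw [intervalIntegral.integral_add hint1 hint2] at key
  have e1 : (∫ s in (0:ℝ)..δ, c * Real.sin (c * s) * w s)
      = c * ∫ s in (0:ℝ)..δ, Real.sin (c * s) * w s := by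
    rw [← intervalIntegral.integral_const_mul]; congr 1; ext s; ring
  have e2 : (∫ s in (0:ℝ)..δ, (-(Real.cos (c * s))) * w' s)
      = -∫ s in (0:ℝ)..δ, Real.cos (c * s) * w' s := by
    rw [← intervalIntegral.integral_neg]; congr 1; ext s; ring
  rw [e1, e2] at key
  have : Real.cos (c * 0) = 1 := by norm_num
  rw [this] at key
  linarith

private lemma rl (δ : ℝ) (hδ : 0 < δ) (v : ℝ → ℝ) (hv : ContinuousOn v (Icc 0 δ)) :
    Tendsto (fun k : ℕ => ∫ s in (0:ℝ)..δ, Real.cos (2 * π * k * s) * v s) atTop (nhds 0) := by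
  set g : ℝ → ℂ := indicator (Icc 0 δ) (fun s => (v s : ℂ)) with hg
  have hgint : Integrable g := by
    rw [hg, MeasureTheory.integrable_indicator_iff measurableSet_Icc]
    exact (hv.integrableOn_Icc).ofReal
  have hRL : Tendsto (fun t : ℝ => FourierTransform.fourier g t) (cocompact ℝ) (nhds 0) :=
    Real.zero_at_infty_fourier g
  have hcast : Tendsto (fun k : ℕ => (k : ℝ)) atTop (cocompact ℝ) := by
    refine (tendsto_natCast_atTop_atTop).mono_right ?_
    rw [cocompact_eq_atBot_atTop]; exact le_sup_right
  have h1 : Tendsto (fun k : ℕ => (FourierTransform.fourier g k).re) atTop (nhds 0) := by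
    have := (Complex.continuous_re.tendsto 0).comp (hRL.comp hcast)
    simpa [Function.comp_def] using this
  convert h1 using 2 with k
  rw [Real.fourier_real_eq_integral_exp_smul]
  have hre : ∀ s : ℝ, (Complex.exp (↑(-2 * π * s * (k:ℝ)) * Complex.I) • g s).re
      = indicator (Icc 0 δ) (fun s => Real.cos (2 * π * k * s) * v s) s := by
    intro s
    by_cases hs : s ∈ Icc (0:ℝ) δ
    · simp only [hg, indicator_of_mem hs, Complex.smul_re]
      simp [Complex.exp_ofReal_mul_I_re]
      left
      rw [show -(2 * (π:ℂ) * s * k * Complex.I) = ((-(2*π*s*k) : ℝ) : ℂ) * Complex.I by push_cast; ring,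
        Complex.exp_ofReal_mul_I_re]
      rw [show -(2*π*s*(k:ℝ)) = -(2*π*(k:ℝ)*s) by ring, Real.cos_neg]
    · simp [hg, indicator_of_notMem hs]
  have hint : Integrable (fun s => Complex.exp (↑(-2 * π * s * (k:ℝ)) * Complex.I) • g s) := by
    simp_rw [smul_eq_mul]
    apply hgint.bdd_mul (c := 1)
    · apply Continuous.aestronglyMeasurable
      exact Complex.continuous_exp.comp ((Complex.continuous_ofReal.comp
        ((continuous_const.mul continuous_id).mul continuous_const)).mul continuous_const)
    · exact Filter.Eventually.of_forall (fun x => (Complex.norm_exp_ofReal_mul_I _).le)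
  have hre2 := integral_re hint
  simp only [RCLike.re_to_complex] at hre2
  rw [← hre2]
  simp_rw [hre]
  rw [MeasureTheory.integral_indicator measurableSet_Icc,
    MeasureTheory.integral_Icc_eq_integral_Ioc, ← intervalIntegral.integral_of_le hδ.le]

theorem stmt1 (δ : ℝ) (hδ : 0 < δ) (w : ℝ → ℝ)
    (hw : ContDiffOn ℝ 1 w (Icc 0 δ))
    (hpos : ∀ s ∈ Icc 0 δ, 0 ≤ w s)
    (hmono : AntitoneOn w (Icc 0 δ))
    (hnc : w δ < w 0)
    (hnorm : (∫ s in (0:ℝ)..δ, w s) = 1)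
    (ν : ℝ) (hν : ν = ∫ s in (0:ℝ)..δ, s * w s) :
    ((w 0 - w δ) / ν ≤
      Filter.liminf (fun k : ℕ =>
        2 * π * k * ((1 / ν) * ∫ s in (0:ℝ)..δ, Real.sin (2 * π * k * s) * w s)) atTop)
    ∧ 0 < (w 0 - w δ) / ν := by
  have hνpos : 0 < ν := hν ▸ nu_pos δ hδ w hw hpos hmono hnorm
  have hapos : 0 < (w 0 - w δ) / ν := div_pos (sub_pos.2 hnc) hνpos
  refine ⟨?_, hapos⟩
  set w' := derivWithin w (Icc 0 δ) with hw'def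
  set c : ℕ → ℝ := fun k => ∫ s in (0:ℝ)..δ, Real.cos (2 * π * k * s) * w' s with hcdef
  set f : ℕ → ℝ := fun k =>
    2 * π * k * ((1 / ν) * ∫ s in (0:ℝ)..δ, Real.sin (2 * π * k * s) * w s) with hfdef
  set g : ℕ → ℝ := fun k => (1 / ν) * (w 0 - w δ + c k) with hgdef
  have hwδ : 0 ≤ w δ := hpos δ (right_mem_Icc.2 hδ.le)
  have hkey : ∀ k : ℕ, f k = (1 / ν) * (w 0 - Real.cos (2 * π * k * δ) * w δ + c k) := by
    intro k
    have := ibp δ hδ w hw (2 * π * k)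
    simp only [hfdef, hcdef]
    rw [show 2 * π * (k:ℝ) * ((1 / ν) * ∫ s in (0:ℝ)..δ, Real.sin (2 * π * k * s) * w s)
      = (1 / ν) * (2 * π * (k:ℝ) * ∫ s in (0:ℝ)..δ, Real.sin (2 * π * k * s) * w s) by ring]
    rw [this]
  have hle : ∀ k : ℕ, g k ≤ f k := by
    intro k
    rw [hkey k]
    apply mul_le_mul_of_nonneg_left _ (by positivity)
    nlinarith [Real.cos_le_one (2 * π * k * δ)]
  have hc0 : Tendsto c atTop (nhds 0) :=
    rl δ hδ w' (hw.continuousOn_derivWithin (uniqueDiffOn_Icc hδ) le_rfl)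
  have hgt : Tendsto g atTop (nhds ((w 0 - w δ) / ν)) := by
    have := (tendsto_const_nhds (x := w 0 - w δ) (f := atTop)).add hc0
    have h2 := this.const_mul (1 / ν)
    rw [add_zero] at h2
    have heq : 1 / ν * (w 0 - w δ) = (w 0 - w δ) / ν := by ring
    rw [heq] at h2
    exact h2
  have hliminfg : Filter.liminf g atTop = (w 0 - w δ) / ν := hgt.liminf_eq
  rw [← hliminfg]
  refine Filter.liminf_le_liminf (Filter.Eventually.of_forall hle) ?_ ?_
  · exact hgt.isBoundedUnder_ge
  · apply Filter.isCoboundedUnder_ge_of_eventually_le (x := 1 / ν * (w 0 + w δ + 1)) atTop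
    filter_upwards [hc0.eventually (eventually_le_nhds (by norm_num : (0:ℝ) < 1))] with k hk
    rw [hkey k]
    apply mul_le_mul_of_nonneg_left _ (by positivity)
    nlinarith [Real.neg_one_le_cos (2 * π * k * δ)]
end

section
/- Under the assumptions of the preceding statements (kernel $w_\delta$ is $\mathbf{C}^1$, nonnegative, non-increasing, non-constant on $[0,\delta]$, integrating to 1), the infimum $\alpha := \inf_{k \geq 1} 2\pi k\, b_\delta(k)$ is strictly positive, where $b_\delta(k) = \frac{1}{\nu(\delta)}\int_0^\delta \sin(2\pi k s) w_\delta(s)\,ds$ and $\nu(\delta) = \int_0^\delta s\, w_\delta(s)\,ds$. -/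
open Real Set MeasureTheory intervalIntegral Filter Topology

private lemma antitone_hasDerivAt_nonpos {w : ℝ → ℝ} {a b x y' : ℝ}
    (hmono : AntitoneOn w (Icc a b)) (hx : x ∈ Ioo a b) (h : HasDerivAt w y' x) : y' ≤ 0 := by
  have h' : HasDerivWithinAt w y' (Ioo x b) x := h.hasDerivWithinAt
  rw [hasDerivWithinAt_iff_tendsto_slope] at h'
  have hne : (Ioo x b) \ {x} = Ioo x b := by
    apply diff_singleton_eq_self; simp
  rw [hne] at h'
  haveI : (𝓝[Ioo x b] x).NeBot := by
    rw [nhdsWithin_Ioo_eq_nhdsGT hx.2]; infer_instance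
  refine le_of_tendsto h' ?_
  filter_upwards [self_mem_nhdsWithin] with y hy
  rw [slope_def_field]
  apply div_nonpos_of_nonpos_of_nonneg
  · rw [sub_nonpos]
    exact hmono ⟨hx.1.le, hx.2.le⟩ ⟨(hx.1.trans hy.1).le, hy.2.le⟩ hy.1.le
  · linarith [hy.1]

theorem stmt2 (δ : ℝ) (hδ : 0 < δ) (w : ℝ → ℝ)
    (hw : ContDiffOn ℝ 1 w (Icc 0 δ))
    (hpos : ∀ s ∈ Icc 0 δ, 0 ≤ w s)
    (hmono : AntitoneOn w (Icc 0 δ))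
    (hnc : w δ < w 0)
    (hnorm : (∫ s in (0:ℝ)..δ, w s) = 1)
    (ν : ℝ) (hν : ν = ∫ s in (0:ℝ)..δ, s * w s) :
    0 < sInf {x : ℝ | ∃ k : ℕ, 1 ≤ k ∧
      x = 2 * π * k * ((1 / ν) * ∫ s in (0:ℝ)..δ, Real.sin (2 * π * k * s) * w s)} := by
  have h0δ : (0:ℝ) ≤ δ := hδ.le
  have hIcc : uIcc (0:ℝ) δ = Icc 0 δ := uIcc_of_le h0δ
  have hwc : ContinuousOn w (Icc 0 δ) := hw.continuousOn
  set w' : ℝ → ℝ := derivWithin w (Icc 0 δ) with hw'def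
  have hUD : UniqueDiffOn ℝ (Icc (0:ℝ) δ) := uniqueDiffOn_Icc hδ
  have hdiff : DifferentiableOn ℝ w (Icc 0 δ) := hw.differentiableOn one_ne_zero
  have hderiv : ∀ x ∈ Icc (0:ℝ) δ, HasDerivWithinAt w (w' x) (Icc 0 δ) x :=
    fun x hx => (hdiff x hx).hasDerivWithinAt
  have hw'c : ContinuousOn w' (Icc 0 δ) := hw.continuousOn_derivWithin hUD le_rfl
  have hderivAt : ∀ x ∈ Ioo (0:ℝ) δ, HasDerivAt w (w' x) x := fun x hx =>
    (hderiv x (Ioo_subset_Icc_self hx)).hasDerivAt (Icc_mem_nhds hx.1 hx.2)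
  have hw'le : ∀ x ∈ Ioo (0:ℝ) δ, w' x ≤ 0 := fun x hx =>
    antitone_hasDerivAt_nonpos hmono hx (hderivAt x hx)
  have hw'int : IntervalIntegrable w' volume 0 δ := by
    apply ContinuousOn.intervalIntegrable; rw [hIcc]; exact hw'c
  -- MVT point
  obtain ⟨c, hcmem, hcval⟩ := exists_hasDerivAt_eq_slope w w' hδ hwc hderivAt
  have hw'cneg : w' c < 0 := by
    rw [hcval]; apply div_neg_of_neg_of_pos <;> linarith
  set m : ℝ := -(w' c) / 2 with hm
  have hmpos : 0 < m := by rw [hm]; linarith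
  have hcontc : ContinuousAt w' c :=
    (hw'c c (Ioo_subset_Icc_self hcmem)).continuousAt (Icc_mem_nhds hcmem.1 hcmem.2)
  have hev : ∀ᶠ x in 𝓝 c, w' x < w' c / 2 :=
    hcontc.tendsto.eventually_lt_const (by linarith)
  obtain ⟨ε, hε, hball⟩ := Metric.eventually_nhds_iff.mp hev
  set r : ℝ := min (min (ε/2) (c/2)) ((δ - c)/2) with hr
  have hrpos : 0 < r := by
    apply lt_min (lt_min (by linarith) (by linarith [hcmem.1])); linarith [hcmem.2]
  have hr1 : r ≤ ε/2 := (min_le_left _ _).trans (min_le_left _ _)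
  have hr2 : r ≤ c/2 := (min_le_left _ _).trans (min_le_right _ _)
  have hr3 : r ≤ (δ - c)/2 := min_le_right _ _
  set c1 : ℝ := c - r with hc1def
  set d1 : ℝ := c + r with hd1def
  have hc1pos : 0 < c1 := by rw [hc1def]; linarith [hcmem.1]
  have hd1δ : d1 < δ := by rw [hd1def]; linarith [hcmem.2]
  have hc1d1 : c1 < d1 := by rw [hc1def, hd1def]; linarith
  have hbound : ∀ x ∈ Icc c1 d1, m ≤ -(w' x) := by
    intro x hx
    have hd : dist x c < ε := by
      rw [Real.dist_eq, abs_lt]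
      constructor <;> [skip; skip] <;>
        (simp only [hc1def, hd1def] at hx; cases' hx with h1 h2; linarith)
    have := hball hd
    linarith
  -- ν positive
  have hw0 : 0 < w 0 := lt_of_le_of_lt (hpos δ ⟨h0δ, le_rfl⟩) hnc
  have hs0 : ∃ s0 ∈ Ioo (0:ℝ) δ, 0 < w s0 := by
    haveI : (𝓝[Ioo (0:ℝ) δ] 0).NeBot := by
      rw [nhdsWithin_Ioo_eq_nhdsGT hδ]; infer_instance
    have h1 : ∀ᶠ s in 𝓝[Icc (0:ℝ) δ] 0, 0 < w s :=
      (hwc 0 ⟨le_rfl, h0δ⟩).eventually_const_lt hw0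
    have h2 : ∀ᶠ s in 𝓝[Ioo (0:ℝ) δ] 0, 0 < w s :=
      h1.filter_mono (nhdsWithin_mono _ Ioo_subset_Icc_self)
    obtain ⟨s0, h3, h4⟩ := (h2.and self_mem_nhdsWithin).exists
    exact ⟨s0, h4, h3⟩
  obtain ⟨s0, hs0mem, hs0w⟩ := hs0
  have hνpos : 0 < ν := by
    rw [hν]
    apply intervalIntegral.integral_pos hδ
    · exact continuous_id.continuousOn.mul hwc
    · intro x hx; exact mul_nonneg hx.1.le (hpos x ⟨hx.1.le, hx.2⟩)
    · exact ⟨s0, ⟨hs0mem.1.le, hs0mem.2.le⟩, mul_pos hs0mem.1 hs0w⟩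
  -- key identity via integration by parts
  have key : ∀ k : ℕ, 1 ≤ k →
      2 * π * (k:ℝ) * ∫ s in (0:ℝ)..δ, Real.sin (2 * π * k * s) * w s
      = (1 - Real.cos (2 * π * k * δ)) * w δ
        + ∫ x in (0:ℝ)..δ, (Real.cos (2 * π * k * x) - 1) * w' x := by
    intro k hk
    have hkpos : (0:ℝ) < k := by exact_mod_cast hk
    set L : ℝ := 2 * π * k with hLdef
    have hL : 0 < L := by positivity
    have hL0 : L ≠ 0 := ne_of_gt hL
    have hv' : ∀ x : ℝ, HasDerivAt (fun s => -(Real.cos (L * s) / L)) (Real.sin (L * x)) x := by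
      intro x
      have h1 : HasDerivAt (fun s : ℝ => L * s) L x := by
        simpa using (hasDerivAt_id x).const_mul L
      have h2 : HasDerivAt (fun s => Real.cos (L * s)) (-Real.sin (L * x) * L) x :=
        (Real.hasDerivAt_cos (L * x)).comp x h1
      have h3 := (h2.div_const L).neg
      have e : (-(-Real.sin (L * x) * L / L)) = Real.sin (L * x) := by
        rw [neg_mul, neg_div, neg_neg, mul_div_cancel_right₀ _ hL0]
      rw [e] at h3; exact h3
    have hvint : IntervalIntegrable (fun x => Real.sin (L * x)) volume 0 δ :=
      (Real.continuous_sin.comp (continuous_const.mul continuous_id)).intervalIntegrable 0 δ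
    have ibp := integral_mul_deriv_eq_deriv_mul_of_hasDerivWithinAt
      (u := w) (v := fun s => -(Real.cos (L * s) / L)) (u' := w')
      (v' := fun x => Real.sin (L * x)) (a := 0) (b := δ)
      (fun x hx => by rw [hIcc] at hx ⊢; exact hderiv x hx)
      (fun x _ => (hv' x).hasDerivWithinAt) hw'int hvint
    have e1 : ∫ s in (0:ℝ)..δ, Real.sin (L * s) * w s = ∫ x in (0:ℝ)..δ, w x * Real.sin (L * x) := by
      apply integral_congr; intro x _; ring
    have hint1 : IntervalIntegrable (fun x => (Real.cos (L * x) - 1) * w' x) volume 0 δ := by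
      apply ContinuousOn.intervalIntegrable; rw [hIcc]
      exact (((Real.continuous_cos.comp (continuous_const.mul continuous_id)).sub
        continuous_const).continuousOn).mul hw'c
    have e2 : ∫ x in (0:ℝ)..δ, w' x * (-(Real.cos (L * x) / L))
        = -(1/L) * ∫ x in (0:ℝ)..δ, Real.cos (L * x) * w' x := by
      rw [← intervalIntegral.integral_const_mul]
      apply integral_congr; intro x _; ring
    have ftc : ∫ x in (0:ℝ)..δ, w' x = w δ - w 0 :=
      integral_eq_sub_of_hasDeriv_right_of_le h0δ hwc
        (fun x hx => (hderivAt x hx).hasDerivWithinAt) hw'int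
    have e3 : ∫ x in (0:ℝ)..δ, Real.cos (L * x) * w' x
        = (∫ x in (0:ℝ)..δ, (Real.cos (L * x) - 1) * w' x) + (w δ - w 0) := by
      rw [← ftc, ← intervalIntegral.integral_add hint1 hw'int]
      apply integral_congr; intro x _; ring
    rw [e1, ibp, e2, e3]
    simp only [mul_zero, Real.cos_zero]
    field_simp
    ring
  -- value of the auxiliary integral B
  have hBval : ∀ k : ℕ, 1 ≤ k → (∫ x in c1..d1, (1 - Real.cos (2 * π * k * x)))
      = (d1 - c1) - (Real.sin (2 * π * k * d1) - Real.sin (2 * π * k * c1)) / (2 * π * k) := by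
    intro k hk
    have hkpos : (0:ℝ) < k := by exact_mod_cast hk
    set L : ℝ := 2 * π * k with hLdef
    have hL : 0 < L := by positivity
    have hL0 : L ≠ 0 := ne_of_gt hL
    have hcosint : IntervalIntegrable (fun x => Real.cos (L * x)) volume c1 d1 :=
      (Real.continuous_cos.comp (continuous_const.mul continuous_id)).intervalIntegrable _ _
    rw [intervalIntegral.integral_sub intervalIntegrable_const hcosint]
    rw [intervalIntegral.integral_comp_mul_left (fun x => Real.cos x) hL0]
    rw [integral_cos]
    simp [smul_eq_mul]
    ring
  -- positivity of B for each k
  have hBpos : ∀ k : ℕ, 1 ≤ k → 0 < ∫ x in c1..d1, (1 - Real.cos (2 * π * k * x)) := by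
    intro k hk
    have hkpos : (0:ℝ) < k := by exact_mod_cast hk
    set L : ℝ := 2 * π * k with hLdef
    have hL : 0 < L := by positivity
    have hL0 : L ≠ 0 := ne_of_gt hL
    have hZ : volume (range (fun n : ℤ => (n : ℝ) * (2 * π) / L)) = 0 :=
      (countable_range _).measure_zero _
    have hne : (Ioo c1 d1 \ range (fun n : ℤ => (n : ℝ) * (2 * π) / L)).Nonempty := by
      apply nonempty_of_measure_ne_zero (μ := volume)
      rw [measure_diff_null hZ]
      simp only [Real.volume_Ioo]
      intro h
      rw [ENNReal.ofReal_eq_zero] at h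
      linarith
    obtain ⟨t, htmem, htZ⟩ := hne
    have hcoslt : Real.cos (L * t) < 1 := by
      rcases lt_or_eq_of_le (Real.cos_le_one (L * t)) with h | h
      · exact h
      · exfalso
        obtain ⟨n, hn⟩ := (Real.cos_eq_one_iff (L * t)).mp h
        exact htZ ⟨n, by rw [div_eq_iff hL0]; linarith [hn]⟩
    apply intervalIntegral.integral_pos hc1d1
    · exact (continuous_const.sub (Real.continuous_cos.comp
        (continuous_const.mul continuous_id))).continuousOn
    · intro x _; linarith [Real.cos_le_one (L * x)]
    · exact ⟨t, Ioo_subset_Icc_self htmem, by linarith⟩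
  -- main inequality: m * B k ≤ 2πk * ∫ sin w
  have main : ∀ k : ℕ, 1 ≤ k →
      m * (∫ x in c1..d1, (1 - Real.cos (2 * π * k * x)))
      ≤ 2 * π * (k:ℝ) * ∫ s in (0:ℝ)..δ, Real.sin (2 * π * k * s) * w s := by
    intro k hk
    have hkpos : (0:ℝ) < k := by exact_mod_cast hk
    set L : ℝ := 2 * π * k with hLdef
    have hL : 0 < L := by positivity
    have hint1 : IntervalIntegrable (fun x => (Real.cos (L * x) - 1) * w' x) volume 0 δ := by
      apply ContinuousOn.intervalIntegrable; rw [hIcc]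
      exact (((Real.continuous_cos.comp (continuous_const.mul continuous_id)).sub
        continuous_const).continuousOn).mul hw'c
    have hsub : Icc c1 d1 ⊆ Icc 0 δ := Icc_subset_Icc hc1pos.le hd1δ.le
    have hIccsub : uIcc c1 d1 ⊆ uIcc 0 δ := by
      rw [hIcc, uIcc_of_le hc1d1.le]; exact hsub
    have hint3 : IntervalIntegrable (fun x => (Real.cos (L * x) - 1) * w' x) volume c1 d1 :=
      hint1.mono_set hIccsub
    have hint2 : IntervalIntegrable (fun x => m * (1 - Real.cos (L * x))) volume c1 d1 :=
      (continuous_const.mul (continuous_const.sub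
        (Real.continuous_cos.comp (continuous_const.mul continuous_id)))).intervalIntegrable _ _
    -- step 1: m * B ≤ ∫_{c1}^{d1} (cos - 1) w'
    have step1 : m * (∫ x in c1..d1, (1 - Real.cos (L * x)))
        ≤ ∫ x in c1..d1, (Real.cos (L * x) - 1) * w' x := by
      rw [← intervalIntegral.integral_const_mul]
      apply intervalIntegral.integral_mono_on hc1d1.le hint2 hint3
      intro x hx
      have h1 : m ≤ -(w' x) := hbound x hx
      have h2 : (0:ℝ) ≤ 1 - Real.cos (L * x) := by linarith [Real.cos_le_one (L * x)]
      nlinarith [mul_nonneg h2 (by linarith : (0:ℝ) ≤ -(w' x) - m)]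
    -- step 2: extend to [0, δ]
    have step2 : (∫ x in c1..d1, (Real.cos (L * x) - 1) * w' x)
        ≤ ∫ x in (0:ℝ)..δ, (Real.cos (L * x) - 1) * w' x := by
      apply intervalIntegral.integral_mono_interval hc1pos.le hc1d1.le hd1δ.le _ hint1
      rw [Measure.restrict_congr_set (Ioo_ae_eq_Ioc (a := (0:ℝ)) (b := δ)).symm]
      apply ae_restrict_of_forall_mem measurableSet_Ioo
      intro x hx
      simp only [Pi.zero_apply]
      have h1 : Real.cos (L * x) - 1 ≤ 0 := by linarith [Real.cos_le_one (L * x)]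
      have h2 := hw'le x hx
      nlinarith
    -- step 3: nonnegative boundary term
    have step3 : (0:ℝ) ≤ (1 - Real.cos (L * δ)) * w δ :=
      mul_nonneg (by linarith [Real.cos_le_one (L * δ)]) (hpos δ ⟨h0δ, le_rfl⟩)
    calc m * (∫ x in c1..d1, (1 - Real.cos (L * x)))
        ≤ ∫ x in (0:ℝ)..δ, (Real.cos (L * x) - 1) * w' x := step1.trans step2
      _ ≤ (1 - Real.cos (L * δ)) * w δ
            + ∫ x in (0:ℝ)..δ, (Real.cos (L * x) - 1) * w' x := by linarith
      _ = 2 * π * (k:ℝ) * ∫ s in (0:ℝ)..δ, Real.sin (2 * π * k * s) * w s := (key k hk).symm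
  -- assembly
  set F : ℕ → ℝ := fun k =>
    2 * π * k * ((1 / ν) * ∫ s in (0:ℝ)..δ, Real.sin (2 * π * k * s) * w s) with hF
  have hFeq : ∀ k : ℕ, F k
      = (1/ν) * (2 * π * (k:ℝ) * ∫ s in (0:ℝ)..δ, Real.sin (2 * π * k * s) * w s) := by
    intro k; rw [hF]; ring
  have hFlb : ∀ k : ℕ, 1 ≤ k →
      (1/ν) * (m * (∫ x in c1..d1, (1 - Real.cos (2 * π * k * x)))) ≤ F k := by
    intro k hk; rw [hFeq]
    exact mul_le_mul_of_nonneg_left (main k hk) (by positivity)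
  have hFpos : ∀ k : ℕ, 1 ≤ k → 0 < F k := fun k hk =>
    lt_of_lt_of_le (mul_pos (one_div_pos.mpr hνpos) (mul_pos hmpos (hBpos k hk))) (hFlb k hk)
  set K : ℕ := ⌈2 / (π * (d1 - c1))⌉₊ + 1 with hK
  have hK1 : 1 ≤ K := Nat.succ_le_succ (Nat.zero_le _)
  have hd1c1 : 0 < d1 - c1 := by linarith
  have htail : ∀ k : ℕ, K ≤ k → (1/ν) * (m * ((d1 - c1)/2)) ≤ F k := by
    intro k hkK
    have hk1 : 1 ≤ k := le_trans hK1 hkK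
    have hkpos : (0:ℝ) < k := by exact_mod_cast hk1
    refine le_trans ?_ (hFlb k hk1)
    refine mul_le_mul_of_nonneg_left ?_ (by positivity)
    refine mul_le_mul_of_nonneg_left ?_ hmpos.le
    rw [hBval k hk1]
    have hsin : Real.sin (2*π*k*d1) - Real.sin (2*π*k*c1) ≤ 2 := by
      linarith [Real.sin_le_one (2*π*(k:ℝ)*d1), Real.neg_one_le_sin (2*π*(k:ℝ)*c1)]
    have hKk : 2 / (π * (d1 - c1)) ≤ (k:ℝ) := by
      calc 2 / (π*(d1-c1)) ≤ (⌈2 / (π * (d1 - c1))⌉₊ : ℝ) := Nat.le_ceil _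
        _ ≤ (K:ℝ) := by rw [hK]; push_cast; linarith
        _ ≤ (k:ℝ) := by exact_mod_cast hkK
    have hpk : 2 ≤ π * (d1-c1) * k := by
      rw [div_le_iff₀ (by positivity)] at hKk; linarith
    have h2L : (Real.sin (2*π*k*d1) - Real.sin (2*π*k*c1)) / (2*π*k) ≤ (d1-c1)/2 := by
      rw [div_le_div_iff₀ (by positivity) two_pos]
      have hexp : (d1-c1) * (2*π*(k:ℝ)) = 2*(π*(d1-c1)*(k:ℝ)) := by ring
      linarith
    linarith
  have hKne : (Finset.Icc 1 K).Nonempty := ⟨1, Finset.mem_Icc.mpr ⟨le_rfl, hK1⟩⟩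
  have hεpos : 0 < min ((1/ν) * (m * ((d1 - c1)/2))) ((Finset.Icc 1 K).inf' hKne F) := by
    apply lt_min
    · exact mul_pos (one_div_pos.mpr hνpos) (mul_pos hmpos (by linarith))
    · rw [Finset.lt_inf'_iff]
      intro k hk; exact hFpos k (Finset.mem_Icc.mp hk).1
  refine lt_of_lt_of_le hεpos (le_csInf ⟨F 1, 1, le_rfl, rfl⟩ ?_)
  rintro x ⟨k, hk1, rfl⟩
  rcases le_or_gt k K with h | h
  · exact le_trans (min_le_right _ _) (Finset.inf'_le F (Finset.mem_Icc.mpr ⟨hk1, h⟩))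
  · exact le_trans (min_le_left _ _) (htail k h.le)
end

section
/- Periodic Hardy–Littlewood rearrangement inequality: let $\rho : \mathbb{R} \to \mathbb{R}$ be continuous and 1-periodic, and let $f : \mathbb{R} \to \mathbb{R}$ be continuous and monotonically increasing. Then for every $s \in [0,1]$, $\int_0^1 f(\rho(x))\, \rho(x+s)\,dx \leq \int_0^1 f(\rho(x))\, \rho(x)\,dx$. -/
open Real Set MeasureTheory intervalIntegral

open Fin.NatCast in
theorem lemA' (ρ f : ℝ → ℝ) (hmono : Monotone f)
    (hshift : ∀ m : ℕ, ∀ y, ρ (y + m) = ρ y) (N k : ℕ) (hN : 0 < N) (x : ℝ) :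
    ∑ i ∈ Finset.range N, f (ρ (x + i/N)) * ρ (x + (i+k)/N) ≤
    ∑ i ∈ Finset.range N, f (ρ (x + i/N)) * ρ (x + i/N) := by
  haveI : NeZero N := ⟨hN.ne'⟩
  have hNR : (0:ℝ) < N := by positivity
  set a : Fin N → ℝ := fun j => ρ (x + (j : ℕ)/N) with ha
  have key : ∀ i : Fin N, ρ (x + ((i:ℕ)+k)/N) = a (i + (k : Fin N)) := by
    intro i
    have hval : ((i + (k : Fin N)) : Fin N).val = ((i:ℕ) + k) % N := by
      simp [Fin.add_def, Fin.val_natCast, Nat.add_mod, Nat.mod_eq_of_lt i.isLt]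
    have h1 : ((i:ℕ)+k : ℝ) = N * ((((i:ℕ)+k)/N : ℕ) : ℝ) + ((((i:ℕ)+k) % N : ℕ) : ℝ) := by
      exact_mod_cast congrArg (Nat.cast : ℕ → ℝ) (Nat.div_add_mod ((i:ℕ)+k) N).symm
    have hdecomp : ((i:ℕ) + k : ℝ)/N = ((((i:ℕ)+k) % N : ℕ) : ℝ)/N + ((((i:ℕ)+k)/N : ℕ) : ℝ) := by
      rw [h1]; field_simp; ring
    rw [ha]; simp only [hval]
    rw [hdecomp, ← add_assoc, hshift]
  calc ∑ i ∈ Finset.range N, f (ρ (x + i/N)) * ρ (x + (i+k)/N)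
      = ∑ i : Fin N, f (a i) * a (i + (k : Fin N)) := by
        rw [← Fin.sum_univ_eq_sum_range (fun i => f (ρ (x + i/N)) * ρ (x + (i+k)/N))]
        exact Finset.sum_congr rfl fun i _ => by rw [key i]
    _ ≤ ∑ i : Fin N, f (a i) * a i := by
        have hmv : Monovary (f ∘ a) a := fun i j hij => hmono hij.le
        have := hmv.sum_smul_comp_perm_le_sum_smul (σ := Equiv.addRight ((k : Fin N)))
        simpa [smul_eq_mul] using this
    _ = ∑ i ∈ Finset.range N, f (ρ (x + i/N)) * ρ (x + i/N) :=
        Fin.sum_univ_eq_sum_range (fun i => f (ρ (x + i/N)) * ρ (x + i/N)) N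

theorem lemB' (g : ℝ → ℝ) (hg : Continuous g) (N : ℕ) (hN : 0 < N) :
    ∫ x in (0:ℝ)..1, g x = ∑ i ∈ Finset.range N, ∫ x in (0:ℝ)..(1/N), g (x + i/N) := by
  have hNR : (0:ℝ) < N := by positivity
  have h := intervalIntegral.sum_integral_adjacent_intervals (a := fun i : ℕ => (i:ℝ)/N)
    (n := N) (f := g) (μ := volume) (fun k _ => hg.intervalIntegrable _ _)
  simp only [Nat.cast_zero, zero_div, div_self hNR.ne'] at h
  rw [← h]
  refine Finset.sum_congr rfl fun i _ => ?_
  rw [intervalIntegral.integral_comp_add_right g ((i:ℝ)/N)]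
  congr 1 <;> push_cast <;> ring

theorem stmt5 (ρ : ℝ → ℝ) (hρ : Continuous ρ) (hper : Function.Periodic ρ 1)
    (f : ℝ → ℝ) (hf : Continuous f) (hmono : Monotone f) :
    ∀ s ∈ Icc (0:ℝ) 1,
      (∫ x in (0:ℝ)..1, f (ρ x) * ρ (x + s)) ≤ ∫ x in (0:ℝ)..1, f (ρ x) * ρ x := by
  intro s hs
  have hshift : ∀ m : ℕ, ∀ y, ρ (y + m) = ρ y := by
    intro m
    induction m with
    | zero => simp
    | succ m ih => intro y; push_cast; rw [← add_assoc, hper, ih]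
  set F : ℝ → ℝ := fun t => ∫ x in (0:ℝ)..1, f (ρ x) * ρ (x + t) with hF
  -- key inequality for rational shifts k/N
  have key : ∀ N k : ℕ, 0 < N → F ((k:ℝ)/N) ≤ F 0 := by
    intro N k hN
    have hNR : (0:ℝ) < N := by positivity
    have hcont1 : Continuous fun x => f (ρ x) * ρ (x + (k:ℝ)/N) :=
      (hf.comp hρ).mul (hρ.comp (continuous_id.add continuous_const))
    have hcont0 : Continuous fun x => f (ρ x) * ρ x := (hf.comp hρ).mul hρ
    have e1 : F ((k:ℝ)/N) = ∫ x in (0:ℝ)..(1/N),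
        ∑ i ∈ Finset.range N, f (ρ (x + i/N)) * ρ (x + (i+k)/N) := by
      show (∫ x in (0:ℝ)..1, f (ρ x) * ρ (x + (k:ℝ)/N)) = _
      rw [lemB' _ hcont1 N hN]
      rw [intervalIntegral.integral_finset_sum (μ := volume) (a := 0) (b := 1/N)
        (f := fun (i : ℕ) (x : ℝ) => f (ρ (x + i/N)) * ρ (x + ((i:ℝ)+k)/N))
        (fun i _ => Continuous.intervalIntegrable (by fun_prop) _ _)]
      refine Finset.sum_congr rfl fun i _ => ?_
      refine intervalIntegral.integral_congr fun x _ => ?_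
      push_cast [add_div]
      ring_nf
    have e0 : F 0 = ∫ x in (0:ℝ)..(1/N),
        ∑ i ∈ Finset.range N, f (ρ (x + i/N)) * ρ (x + i/N) := by
      have : F 0 = ∫ x in (0:ℝ)..1, f (ρ x) * ρ x := by
        show (∫ x in (0:ℝ)..1, f (ρ x) * ρ (x + 0)) = _
        simp
      rw [this, lemB' _ hcont0 N hN]
      rw [intervalIntegral.integral_finset_sum (μ := volume) (a := 0) (b := 1/N)
        (f := fun (i : ℕ) (x : ℝ) => f (ρ (x + i/N)) * ρ (x + (i:ℝ)/N))
        (fun i _ => Continuous.intervalIntegrable (by fun_prop) _ _)]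
    rw [e1, e0]
    refine intervalIntegral.integral_mono_on (by positivity)
      (Continuous.intervalIntegrable (by continuity) _ _)
      (Continuous.intervalIntegrable (by continuity) _ _)
      (fun x _ => lemA' ρ f hmono hshift N k hN x)
  -- continuity of F
  have hFc : Continuous F := by
    have : Continuous (Function.uncurry fun (t : ℝ) (x : ℝ) => f (ρ x) * ρ (x + t)) := by
      apply Continuous.mul
      · exact (hf.comp hρ).comp continuous_snd
      · exact hρ.comp (continuous_snd.add continuous_fst)
    exact intervalIntegral.continuous_parametric_intervalIntegral_of_continuous' this 0 1
  -- approximate s by ⌊s*n⌋/n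
  have htend : Filter.Tendsto (fun n : ℕ => (⌊s * n⌋₊ : ℝ)/n) Filter.atTop (nhds s) :=
    (tendsto_nat_floor_mul_div_atTop hs.1).comp tendsto_natCast_atTop_atTop
  have htendF : Filter.Tendsto (fun n : ℕ => F ((⌊s * n⌋₊ : ℝ)/n)) Filter.atTop (nhds (F s)) :=
    (hFc.tendsto s).comp htend
  have hev : ∀ᶠ n : ℕ in Filter.atTop, F ((⌊s * n⌋₊ : ℝ)/n) ≤ F 0 := by
    filter_upwards [Filter.eventually_gt_atTop 0] with n hn
    exact key n ⌊s * n⌋₊ hn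
  have := le_of_tendsto htendF hev
  calc (∫ x in (0:ℝ)..1, f (ρ x) * ρ (x + s)) = F s := rfl
    _ ≤ F 0 := this
    _ = ∫ x in (0:ℝ)..1, f (ρ x) * ρ x := by
        show (∫ x in (0:ℝ)..1, f (ρ x) * ρ (x + 0)) = _
        simp
end

section
/- Uniform-in-$\delta$ spectral bound for rescaled kernels: let $w : [0,1] \to \mathbb{R}$ be $\mathbf{C}^1$, nonnegative, non-increasing, non-constant, with $\int_0^1 w = 1$, and for $\delta \in (0,1]$ set $w_\delta(s) = w(s/\delta)/\delta$ on $[0,\delta]$. Then there exists $\alpha > 0$ depending only on $w$ such that $2\pi k\, b_\delta(k) \geq \alpha$ for all integers $k \geq 1$ and all $\delta \in (0,1]$, where $b_\delta(k) = \frac{1}{\nu(\delta)}\int_0^\delta \sin(2\pi k s)\, w_\delta(s)\,ds$ and $\nu(\delta) = \int_0^\delta s\, w_\delta(s)\,ds$. -/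
open Real Set MeasureTheory intervalIntegral
open Filter Topology

lemma cos_le_aux {t : ℝ} (h0 : 0 ≤ t) (h2 : t ≤ 2) : Real.cos t ≤ 1 - 9/32*t^2 := by
  rcases eq_or_lt_of_le h0 with h | h
  · simp [← h]
  · have key : Real.cos t = 1 - 2 * Real.sin (t/2)^2 := by
      have h1 := Real.cos_two_mul' (t/2)
      rw [show 2*(t/2) = t by ring] at h1
      nlinarith [Real.sin_sq_add_cos_sq (t/2)]
    have hs := Real.sin_gt_sub_cube (by linarith : (0:ℝ) < t/2)
    have hge : 3*t/8 ≤ Real.sin (t/2) := by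
      nlinarith [mul_nonneg h0 (by nlinarith : (0:ℝ) ≤ 4 - t^2)]
    nlinarith [hge]

lemma sin_le_aux {x : ℝ} (h0 : 0 ≤ x) (h2 : x ≤ 2) : Real.sin x ≤ x - 3/32*x^3 := by
  have hmono : MonotoneOn (fun x : ℝ => x - 3/32*x^3 - Real.sin x) (Icc 0 2) := by
    have hd : ∀ x : ℝ, HasDerivAt (fun x : ℝ => x - 3/32*x^3 - Real.sin x)
        (1 - 9/32*x^2 - Real.cos x) x := by
      intro x
      have h1 : HasDerivAt (fun x : ℝ => x - 3/32*x^3 - Real.sin x)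
          (1 - 3/32*(3*x^(3-1)) - Real.cos x) x :=
        ((hasDerivAt_id x).sub (((hasDerivAt_pow 3 x)).const_mul (3/32 : ℝ))).sub
          (Real.hasDerivAt_sin x)
      convert h1 using 1; ring
    apply monotoneOn_of_deriv_nonneg (convex_Icc 0 2)
    · exact Continuous.continuousOn (by continuity)
    · exact fun x hx => (hd x).differentiableAt.differentiableWithinAt
    · intro x hx
      rw [(hd x).deriv]
      rw [interior_Icc] at hx
      have := cos_le_aux hx.1.le hx.2.le
      linarith
  have h := hmono (show (0:ℝ) ∈ Icc (0:ℝ) 2 by simp) (show x ∈ Icc (0:ℝ) 2 by constructor <;> linarith) h0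
  simp at h
  linarith

lemma sin_ge_aux {x : ℝ} (h0 : 0 ≤ x) (h1 : x ≤ 1) : x - x^3/4 ≤ Real.sin x := by
  rcases eq_or_lt_of_le h0 with h | h
  · simp [← h]
  · have := Real.sin_gt_sub_cube h
    nlinarith [pow_nonneg h0 3]

lemma cos_int {s1 s2 a : ℝ} (h12 : s1 < s2) (hL : s2 - s1 ≤ 1) (ha : 1 ≤ a) :
    3*(s2-s1)^3/128 ≤ ∫ t in s1..s2, (1 - Real.cos (a*t)) := by
  have ha0 : 0 < a := by linarith
  have hL0 : 0 < s2 - s1 := by linarith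
  have hc : (∫ t in s1..s2, (1 - Real.cos (a*t)))
      = (s2 - s1) - (Real.sin (a*s2) - Real.sin (a*s1))/a := by
    rw [integral_sub intervalIntegrable_const
      ((Continuous.intervalIntegrable (by fun_prop : Continuous fun t : ℝ => Real.cos (a*t))) s1 s2)]
    rw [intervalIntegral.integral_const,
      intervalIntegral.integral_comp_mul_left (fun x => Real.cos x) (ne_of_gt ha0),
      integral_cos]
    simp [smul_eq_mul]
    ring
  rw [hc, Real.sin_sub_sin]
  set x := a*(s2-s1)/2 with hx
  have hx0 : 0 < x := by positivity
  have hM : Real.cos ((a*s2 + a*s1)/2) ≤ 1 := Real.cos_le_one _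
  have hMn : -1 ≤ Real.cos ((a*s2 + a*s1)/2) := Real.neg_one_le_cos _
  have harg : (a*s2 - a*s1)/2 = x := by rw [hx]; ring
  rw [harg]
  rcases le_or_gt x 2 with hx2 | hx2
  · have hs1 := sin_le_aux hx0.le hx2
    have hsn : 0 ≤ Real.sin x := Real.sin_nonneg_of_nonneg_of_le_pi hx0.le
      (by linarith [Real.pi_gt_three])
    have h1 : 2 * Real.sin x * Real.cos ((a*s2 + a*s1)/2) ≤ 2 * Real.sin x := by nlinarith
    have h2 : 2 * Real.sin x ≤ 2*x - 3/16*x^3 := by nlinarith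
    have h3 : (2*x - 3/16*x^3)/a = (s2 - s1) - 3/128*a^2*(s2-s1)^3 := by
      rw [hx]; field_simp; ring
    have h4 : (2 * Real.sin x * Real.cos ((a*s2 + a*s1)/2))/a ≤ (2*x - 3/16*x^3)/a :=
      div_le_div_of_nonneg_right (le_trans h1 h2) ha0.le |>.trans_eq rfl
    have h5 : 1 ≤ a^2 := by nlinarith
    have h6 : 0 < (s2-s1)^3 := by positivity
    nlinarith [h4, h3]
  · have hsin : Real.sin x * Real.cos ((a*s2 + a*s1)/2) ≤ 1 := by
      nlinarith [Real.sin_le_one x, Real.neg_one_le_sin x]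
    have h1 : (2 * Real.sin x * Real.cos ((a*s2 + a*s1)/2))/a ≤ 2/a := by
      apply div_le_div_of_nonneg_right _ ha0.le
      nlinarith
    have h2 : 2/a < (s2-s1)/2 := by
      rw [div_lt_div_iff₀ ha0 two_pos] at *
      nlinarith
    have hcube : (s2-s1)^3 ≤ (s2-s1) := by
      nlinarith [mul_nonneg (mul_nonneg hL0.le (by linarith : (0:ℝ) ≤ 1-(s2-s1))) (by linarith : (0:ℝ) ≤ 1+(s2-s1))]
    linarith [h1, h2, hcube]

lemma keyG (w g : ℝ → ℝ) (hwc : ContinuousOn w (Icc 0 1)) (hgc : ContinuousOn g (Icc 0 1))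
    (hderiv : ∀ x ∈ Ioo (0:ℝ) 1, HasDerivAt w (g x) x)
    (hgle : ∀ x ∈ Icc (0:ℝ) 1, g x ≤ 0)
    (hw1 : 0 ≤ w 1)
    {s1 s2 η : ℝ} (hs1 : 0 ≤ s1) (h12 : s1 < s2) (hs2 : s2 ≤ 1) (hη : 0 < η)
    (hgs : ∀ x ∈ Icc s1 s2, g x ≤ -η)
    {a : ℝ} (ha : 1 ≤ a) :
    η * (3*(s2-s1)^3/128) ≤ a * ∫ t in (0:ℝ)..1, Real.sin (a*t) * w t := by
  have ha0 : 0 < a := by linarith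
  set φ : ℝ → ℝ := fun t => (1 - Real.cos (a*t)) * g t with hφ
  set ψ : ℝ → ℝ := fun t => a * Real.sin (a*t) * w t with hψ
  -- integrability of pieces
  have hII : ∀ (f : ℝ → ℝ), ContinuousOn f (Icc 0 1) → ∀ {b c : ℝ}, 0 ≤ b → b ≤ c → c ≤ 1 →
      IntervalIntegrable f volume b c := by
    intro f hf b c hb hbc hc
    apply ContinuousOn.intervalIntegrable
    rw [uIcc_of_le hbc]
    exact hf.mono (Icc_subset_Icc hb hc)
  have hφc : ContinuousOn φ (Icc 0 1) := (Continuous.continuousOn (by fun_prop)).mul hgc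
  have hψc : ContinuousOn ψ (Icc 0 1) := (Continuous.continuousOn (by fun_prop)).mul hwc
  have hswc : ContinuousOn (fun t => Real.sin (a*t) * w t) (Icc 0 1) :=
    (Continuous.continuousOn (by fun_prop)).mul hwc
  -- FTC
  have hFTC : (∫ t in (0:ℝ)..1, (ψ t + φ t)) = (1 - Real.cos a) * w 1 := by
    have hder : ∀ x ∈ Ioo (0:ℝ) 1, HasDerivWithinAt (fun t => (1 - Real.cos (a*t)) * w t)
        (ψ x + φ x) (Ioi x) x := by
      intro x hx
      have h1 : HasDerivAt (fun t : ℝ => a*t) a x := by simpa using (hasDerivAt_id x).const_mul a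
      have h2 : HasDerivAt (fun t : ℝ => 1 - Real.cos (a*t)) (a * Real.sin (a*x)) x := by
        have := ((Real.hasDerivAt_cos (a*x)).comp x h1).const_sub 1
        exact this.congr_deriv (by ring)
      have h3 := h2.mul (hderiv x hx)
      have h4 : HasDerivAt (fun t => (1 - Real.cos (a*t)) * w t) (ψ x + φ x) x := by
        exact h3
      exact h4.hasDerivWithinAt
    have := integral_eq_sub_of_hasDeriv_right_of_le zero_le_one
      ((Continuous.continuousOn (by fun_prop)).mul hwc) hder
      (hII _ (hψc.add hφc) le_rfl zero_le_one le_rfl)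
    rw [this]
    norm_num
  have hsum : (∫ t in (0:ℝ)..1, (ψ t + φ t)) = (∫ t in (0:ℝ)..1, ψ t) + ∫ t in (0:ℝ)..1, φ t :=
    integral_add (hII _ hψc le_rfl zero_le_one le_rfl) (hII _ hφc le_rfl zero_le_one le_rfl)
  -- split φ integral
  have hsplit : (∫ t in (0:ℝ)..1, φ t)
      = (∫ t in (0:ℝ)..s1, φ t) + (∫ t in s1..s2, φ t) + ∫ t in s2..(1:ℝ), φ t := by
    have e1 := integral_add_adjacent_intervals (hII _ hφc le_rfl hs1 (by linarith))
      (hII _ hφc hs1 (by linarith : s1 ≤ 1) le_rfl)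
    have e2 := integral_add_adjacent_intervals (hII _ hφc hs1 h12.le hs2)
      (hII _ hφc (by linarith : (0:ℝ) ≤ s2) hs2 le_rfl)
    rw [← e1, ← e2]; ring
  have hcos_nonneg : ∀ t : ℝ, 0 ≤ 1 - Real.cos (a*t) := fun t => by
    linarith [Real.cos_le_one (a*t)]
  have hb1 : (∫ t in (0:ℝ)..s1, φ t) ≤ 0 := by
    have h := intervalIntegral.integral_nonneg (μ := volume) (f := fun t => -φ t) hs1 ?_
    · rw [intervalIntegral.integral_neg] at h; linarith
    · intro u hu
      have hg := hgle u ⟨hu.1, le_trans hu.2 (by linarith)⟩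
      simp only [hφ]
      nlinarith [hcos_nonneg u]
  have hb3 : (∫ t in s2..(1:ℝ), φ t) ≤ 0 := by
    have h := intervalIntegral.integral_nonneg (μ := volume) (f := fun t => -φ t) hs2 ?_
    · rw [intervalIntegral.integral_neg] at h; linarith
    · intro u hu
      have hg := hgle u ⟨le_trans (by linarith) hu.1, hu.2⟩
      simp only [hφ]
      nlinarith [hcos_nonneg u]
  have hmid : (∫ t in s1..s2, φ t) ≤ (∫ t in s1..s2, (1 - Real.cos (a*t))) * (-η) := by
    have hmono2 : (∫ t in s1..s2, φ t) ≤ ∫ t in s1..s2, (1 - Real.cos (a*t)) * (-η) := by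
      apply integral_mono_on h12.le (hII _ hφc hs1 h12.le hs2)
        ((Continuous.intervalIntegrable (by fun_prop)) s1 s2)
      intro u hu
      simp only [hφ]
      exact mul_le_mul_of_nonneg_left (hgs u hu) (hcos_nonneg u)
    rwa [intervalIntegral.integral_mul_const] at hmono2
  have hm := cos_int h12 (by linarith) ha
  have hmid2 : (∫ t in s1..s2, φ t) ≤ -(η * (3*(s2-s1)^3/128)) := by
    have h2 : (∫ t in s1..s2, (1 - Real.cos (a*t))) * (-η) ≤ (3*(s2-s1)^3/128) * (-η) :=
      mul_le_mul_of_nonpos_right hm (by linarith)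
    calc (∫ t in s1..s2, φ t) ≤ _ := hmid
      _ ≤ (3*(s2-s1)^3/128) * (-η) := h2
      _ = -(η * (3*(s2-s1)^3/128)) := by ring
  have hw1cos : 0 ≤ (1 - Real.cos a) * w 1 :=
    mul_nonneg (by linarith [Real.cos_le_one a]) hw1
  have hψint : (∫ t in (0:ℝ)..1, ψ t) = a * ∫ t in (0:ℝ)..1, Real.sin (a*t) * w t := by
    simp only [hψ, mul_assoc]
    exact intervalIntegral.integral_const_mul a _
  rw [hsum] at hFTC
  rw [← hψint]
  linarith

lemma aux_II {f : ℝ → ℝ} (hf : ContinuousOn f (Icc 0 1)) {b c : ℝ} (hb : 0 ≤ b)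
    (hbc : b ≤ c) (hc : c ≤ 1) : IntervalIntegrable f volume b c := by
  apply ContinuousOn.intervalIntegrable
  rw [uIcc_of_le hbc]
  exact hf.mono (Icc_subset_Icc hb hc)

set_option maxHeartbeats 1000000 in
theorem stmt8 (w : ℝ → ℝ)
    (hw : ContDiffOn ℝ 1 w (Icc 0 1))
    (hpos : ∀ s ∈ Icc (0:ℝ) 1, 0 ≤ w s)
    (hmono : AntitoneOn w (Icc 0 1))
    (hnc : w 1 < w 0)
    (hnorm : (∫ s in (0:ℝ)..1, w s) = 1) :
    ∃ α > 0, ∀ δ ∈ Ioc (0:ℝ) 1, ∀ k : ℕ, 1 ≤ k →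
      α ≤ 2 * π * k *
        ((1 / ∫ s in (0:ℝ)..δ, s * (w (s / δ) / δ)) *
          ∫ s in (0:ℝ)..δ, Real.sin (2 * π * k * s) * (w (s / δ) / δ)) := by
  have hwc : ContinuousOn w (Icc 0 1) := hw.continuousOn
  have hw1 : 0 ≤ w 1 := hpos 1 (by norm_num)
  have hw0 : 0 < w 0 := lt_of_le_of_lt hw1 hnc
  obtain ⟨ν, hν⟩ : ∃ ν : ℝ, ν = ∫ t in (0:ℝ)..1, t * w t := ⟨_, rfl⟩
  have htwc : ContinuousOn (fun t : ℝ => t * w t) (Icc 0 1) :=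
    (continuous_id.continuousOn).mul hwc
  have hνpos : 0 < ν := by
    obtain ⟨c, hc, hwcpos⟩ : ∃ c ∈ Ioo (0:ℝ) 1, 0 < w c := by
      by_contra h
      push_neg at h
      have hzero : ∀ x ∈ Ioc (0:ℝ) 1, w x = 0 := by
        intro x hx
        rcases eq_or_lt_of_le hx.2 with h1 | h1
        · have h2 : ∀ c ∈ Ioo (0:ℝ) 1, w c = 0 := fun c hc =>
            le_antisymm (h c hc) (hpos c ⟨hc.1.le, hc.2.le⟩)
          have h3 := h2 (1/2) (by norm_num)
          have h4 := hmono (show (1:ℝ)/2 ∈ Icc (0:ℝ) 1 by norm_num)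
            (show (1:ℝ) ∈ Icc (0:ℝ) 1 by norm_num) (by norm_num)
          have h5 := hpos 1 (by norm_num)
          rw [h1]
          linarith
        · exact le_antisymm (h x ⟨hx.1, h1⟩) (hpos x ⟨hx.1.le, hx.2⟩)
      have : (∫ s in (0:ℝ)..1, w s) = 0 := by
        rw [intervalIntegral.integral_of_le zero_le_one]
        rw [MeasureTheory.setIntegral_congr_fun measurableSet_Ioc hzero]
        simp
      rw [this] at hnorm
      norm_num at hnorm
    have hwlb : ∀ t ∈ Icc (0:ℝ) c, t * w c ≤ t * w t := by
      intro t ht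
      have := hmono ⟨ht.1, le_trans ht.2 hc.2.le⟩ ⟨hc.1.le, hc.2.le⟩ ht.2
      exact mul_le_mul_of_nonneg_left this ht.1
    have h1 : (∫ t in (0:ℝ)..c, t * w c) ≤ ∫ t in (0:ℝ)..c, t * w t := by
      apply integral_mono_on hc.1.le _ (aux_II htwc le_rfl hc.1.le hc.2.le) hwlb
      apply Continuous.intervalIntegrable
      fun_prop
    have h2 : (∫ t in (0:ℝ)..c, t * w c) = w c * (c^2/2) := by
      rw [intervalIntegral.integral_mul_const, integral_id]
      ring
    have h3 : 0 ≤ ∫ t in c..(1:ℝ), t * w t := by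
      apply intervalIntegral.integral_nonneg hc.2.le
      intro u hu
      exact mul_nonneg (le_trans hc.1.le hu.1) (hpos u ⟨le_trans hc.1.le hu.1, hu.2⟩)
    have h4 : (∫ t in (0:ℝ)..c, t * w t) + (∫ t in c..(1:ℝ), t * w t) = ν := by
      rw [hν]
      exact integral_add_adjacent_intervals (aux_II htwc le_rfl hc.1.le hc.2.le)
        (aux_II htwc hc.1.le hc.2.le le_rfl)
    have h5 : 0 < w c * (c^2/2) := by
      have := pow_pos hc.1 2
      have : 0 < c^2/2 := by positivity
      exact mul_pos hwcpos this
    linarith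
  set g : ℝ → ℝ := derivWithin w (Icc 0 1) with hg
  have hgcont : ContinuousOn g (Icc 0 1) :=
    hw.continuousOn_derivWithin (uniqueDiffOn_Icc one_pos) le_rfl
  have hderiv : ∀ x ∈ Ioo (0:ℝ) 1, HasDerivAt w (g x) x := by
    intro x hx
    have hmem : Icc (0:ℝ) 1 ∈ 𝓝 x := Icc_mem_nhds hx.1 hx.2
    have hd : DifferentiableWithinAt ℝ w (Icc 0 1) x :=
      (hw.differentiableOn one_ne_zero) x ⟨hx.1.le, hx.2.le⟩
    have hda : DifferentiableAt ℝ w x := hd.differentiableAt hmem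
    have hgx : g x = deriv w x := by rw [hg]; exact derivWithin_of_mem_nhds hmem
    rw [hgx]; exact hda.hasDerivAt
  have hgle : ∀ x ∈ Icc (0:ℝ) 1, g x ≤ 0 := by
    intro x hx
    have hd : HasDerivWithinAt w (g x) (Icc 0 1) x :=
      ((hw.differentiableOn one_ne_zero) x hx).hasDerivWithinAt
    rw [hasDerivWithinAt_iff_tendsto_slope] at hd
    have hne : (𝓝[Icc (0:ℝ) 1 \ {x}] x).NeBot := by
      rw [← mem_closure_iff_nhdsWithin_neBot]
      rcases lt_or_ge x 1 with h | h
      · have hsub : Ioc x 1 ⊆ Icc (0:ℝ) 1 \ {x} := fun y hy =>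
          ⟨⟨le_trans hx.1 hy.1.le, hy.2⟩, fun hmem => by simp only [mem_singleton_iff] at hmem; subst hmem; exact lt_irrefl _ hy.1⟩
        apply closure_mono hsub
        rw [closure_Ioc h.ne]
        exact ⟨le_refl x, h.le⟩
      · have hx1 : x = 1 := le_antisymm hx.2 h
        have hsub : Ico (0:ℝ) x ⊆ Icc (0:ℝ) 1 \ {x} := fun y hy =>
          ⟨⟨hy.1, le_trans hy.2.le hx.2⟩, fun hmem => by simp only [mem_singleton_iff] at hmem; subst hmem; exact lt_irrefl _ hy.2⟩
        apply closure_mono hsub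
        rw [closure_Ico (show (0:ℝ) ≠ x by rw [hx1]; norm_num)]
        exact ⟨hx.1, le_refl x⟩
    have hslope : ∀ᶠ y in 𝓝[Icc (0:ℝ) 1 \ {x}] x, slope w x y ≤ 0 := by
      filter_upwards [self_mem_nhdsWithin] with y hy
      obtain ⟨hy1, hy2⟩ := hy
      have hyx : y ≠ x := by simpa using hy2
      rw [slope_def_field]
      rcases lt_or_gt_of_ne hyx with h | h
      · have hw_le : w x ≤ w y := hmono hy1 hx h.le
        apply div_nonpos_of_nonneg_of_nonpos (by linarith) (by linarith)
      · have hw_le : w y ≤ w x := hmono hx hy1 h.le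
        apply div_nonpos_of_nonpos_of_nonneg (by linarith) (by linarith)
    exact le_of_tendsto hd hslope
  set η : ℝ := (w 0 - w 1)/2 with hη
  have hηpos : 0 < η := by rw [hη]; linarith
  obtain ⟨s1, s2, hs1, h12, hs2, hgs⟩ :
      ∃ s1 s2 : ℝ, 0 ≤ s1 ∧ s1 < s2 ∧ s2 ≤ 1 ∧ ∀ x ∈ Icc s1 s2, g x ≤ -η := by
    obtain ⟨c, hc, hceq⟩ := exists_hasDerivAt_eq_slope w g one_pos hwc hderiv
    have hgc_lt : g c < -η := by
      rw [hceq, hη]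
      simp
      linarith
    have hca : ContinuousAt g c :=
      (hgcont c ⟨hc.1.le, hc.2.le⟩).continuousAt (Icc_mem_nhds hc.1 hc.2)
    have hev : {y | g y < -η} ∈ 𝓝 c := hca (Iio_mem_nhds hgc_lt)
    obtain ⟨ε, hε, hball⟩ := Metric.eventually_nhds_iff.mp hev
    set r : ℝ := min (ε/2) ((1 - c)/2) with hr
    have hrpos : 0 < r := lt_min (by linarith) (by linarith [hc.2])
    refine ⟨c, c + r, hc.1.le, by linarith, ?_, ?_⟩
    · have : r ≤ (1 - c)/2 := min_le_right _ _
      linarith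
    · intro x hxm
      have hdist : dist x c < ε := by
        rw [Real.dist_eq, abs_lt]
        have h1 : r ≤ ε/2 := min_le_left _ _
        constructor <;> [linarith [hxm.1]; linarith [hxm.2]]
      exact (hball hdist).le
  set m : ℝ := 3*(s2-s1)^3/128 with hm
  have hmpos : 0 < m := by
    rw [hm]
    have h := pow_pos (show (0:ℝ) < s2 - s1 by linarith) 3
    linarith
  refine ⟨min (3*π^2) (η*m/ν),
    lt_min (by positivity) (div_pos (mul_pos hηpos hmpos) hνpos), ?_⟩
  intro δ hδ k hk
  obtain ⟨hδ0, hδ1⟩ := hδ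
  have hk1 : (1:ℝ) ≤ (k:ℝ) := by exact_mod_cast hk
  have hkpos : (0:ℝ) < (k:ℝ) := by linarith
  set a : ℝ := 2*π*(k:ℝ)*δ with haa
  have ha0 : 0 < a := by
    rw [haa]; exact mul_pos (mul_pos (mul_pos two_pos pi_pos) hkpos) hδ0
  have hδν : 0 < δ * ν := mul_pos hδ0 hνpos
  have hδ2ν : 0 < δ^2 * ν := mul_pos (pow_pos hδ0 2) hνpos
  have hI1 : (∫ s in (0:ℝ)..δ, s * (w (s/δ)/δ)) = δ * ν := by
    have h1 : (∫ s in (0:ℝ)..δ, s * (w (s/δ)/δ))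
        = ∫ s in (0:ℝ)..δ, (fun x => x * w x) (s/δ) := by
      apply intervalIntegral.integral_congr
      intro s _
      simp only
      rw [div_eq_mul_inv (w (s/δ)), div_eq_mul_inv s]
      ring
    rw [h1, intervalIntegral.integral_comp_div (fun x => x * w x) (ne_of_gt hδ0)]
    rw [zero_div, div_self (ne_of_gt hδ0), smul_eq_mul, ← hν]
  have hI2 : (∫ s in (0:ℝ)..δ, Real.sin (2*π*(k:ℝ)*s) * (w (s/δ)/δ))
      = ∫ t in (0:ℝ)..1, Real.sin (a*t) * w t := by
    have h1 : (∫ s in (0:ℝ)..δ, Real.sin (2*π*(k:ℝ)*s) * (w (s/δ)/δ))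
        = ∫ s in (0:ℝ)..δ, (1/δ) * ((fun x => Real.sin (a*x) * w x) (s/δ)) := by
      apply intervalIntegral.integral_congr
      intro s _
      simp only
      rw [haa]
      have harg : 2*π*(k:ℝ)*δ*(s/δ) = 2*π*(k:ℝ)*s := by field_simp
      rw [harg]
      field_simp
    rw [h1, intervalIntegral.integral_const_mul,
      intervalIntegral.integral_comp_div (fun x => Real.sin (a*x) * w x) (ne_of_gt hδ0)]
    rw [zero_div, div_self (ne_of_gt hδ0), smul_eq_mul]
    field_simp
  rw [hI1, hI2]
  obtain ⟨G, hG⟩ : ∃ G : ℝ, G = ∫ t in (0:ℝ)..1, Real.sin (a*t) * w t := ⟨_, rfl⟩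
  rw [← hG]
  rcases le_or_gt a 1 with hcase | hcase
  · have hGlb : (3/4)*a*ν ≤ G := by
      rw [hG]
      have hlow : ∀ t ∈ Icc (0:ℝ) 1, (a*t - (a*t)^3/4) * w t ≤ Real.sin (a*t) * w t := by
        intro t ht
        have h0 : 0 ≤ a*t := mul_nonneg ha0.le ht.1
        have h1 : a*t ≤ 1 := by nlinarith [ht.2, ht.1]
        exact mul_le_mul_of_nonneg_right (sin_ge_aux h0 h1) (hpos t ht)
      have hswc : ContinuousOn (fun t : ℝ => Real.sin (a*t) * w t) (Icc 0 1) :=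
        (Continuous.continuousOn (by fun_prop)).mul hwc
      have hpwc : ContinuousOn (fun t : ℝ => (a*t - (a*t)^3/4) * w t) (Icc 0 1) :=
        (Continuous.continuousOn (by fun_prop)).mul hwc
      have ht3c : ContinuousOn (fun t : ℝ => t^3 * w t) (Icc 0 1) :=
        (Continuous.continuousOn (by fun_prop)).mul hwc
      have hint1 : (∫ t in (0:ℝ)..1, (a*t - (a*t)^3/4) * w t)
          ≤ ∫ t in (0:ℝ)..1, Real.sin (a*t) * w t :=
        integral_mono_on zero_le_one (aux_II hpwc le_rfl zero_le_one le_rfl)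
          (aux_II hswc le_rfl zero_le_one le_rfl) hlow
      have he : ∀ t : ℝ, (a*t - (a*t)^3/4) * w t = a * (t * w t) - (a^3/4) * (t^3 * w t) :=
        fun t => by ring
      have hcomp : (∫ t in (0:ℝ)..1, (a*t - (a*t)^3/4) * w t)
          = a * ν - (a^3/4) * ∫ t in (0:ℝ)..1, t^3 * w t := by
        rw [intervalIntegral.integral_congr (g := fun t : ℝ => a * (t * w t) - (a^3/4) * (t^3 * w t)) (fun t _ => he t)]
        rw [intervalIntegral.integral_sub
          ((aux_II htwc le_rfl zero_le_one le_rfl).const_mul a)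
          ((aux_II ht3c le_rfl zero_le_one le_rfl).const_mul (a^3/4))]
        rw [intervalIntegral.integral_const_mul, intervalIntegral.integral_const_mul, ← hν]
      have hc3 : (∫ t in (0:ℝ)..1, t^3 * w t) ≤ ν := by
        rw [hν]
        apply integral_mono_on zero_le_one (aux_II ht3c le_rfl zero_le_one le_rfl)
          (aux_II htwc le_rfl zero_le_one le_rfl)
        intro t ht
        have h3 : t^3 ≤ t := by
          have := pow_le_pow_of_le_one ht.1 ht.2 (show 1 ≤ 3 by norm_num)
          rwa [pow_one] at this
        exact mul_le_mul_of_nonneg_right h3 (hpos t ht)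
      have hc3n : 0 ≤ ∫ t in (0:ℝ)..1, t^3 * w t := by
        apply intervalIntegral.integral_nonneg zero_le_one
        intro u hu
        exact mul_nonneg (pow_nonneg hu.1 3) (hpos u hu)
      have ha3 : a^3 ≤ a := by
        nlinarith [mul_nonneg (mul_nonneg ha0.le (sub_nonneg.2 hcase)) (by linarith : (0:ℝ) ≤ 1 + a)]
      have e1 : (a^3/4) * (∫ t in (0:ℝ)..1, t^3 * w t) ≤ (a/4)*ν := by
        nlinarith [hc3, hc3n, ha3, hνpos.le, pow_pos ha0 3]
      linarith [hint1, hcomp, e1]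
    calc min (3*π^2) (η*m/ν) ≤ 3*π^2 := min_le_left _ _
      _ ≤ 2*π*(k:ℝ) * (1/(δ*ν) * G) := by
          have h1 : (1/(δ*ν)) * ((3/4)*a*ν) ≤ (1/(δ*ν)) * G :=
            mul_le_mul_of_nonneg_left hGlb (le_of_lt (by exact one_div_pos.mpr hδν))
          have h2 : (1/(δ*ν)) * ((3/4)*a*ν) = (3/4)*(2*π*(k:ℝ)) := by
            rw [haa]; field_simp
          have h3 : 2*π*(k:ℝ) * ((3/4)*(2*π*(k:ℝ))) ≤ 2*π*(k:ℝ) * (1/(δ*ν) * G) := by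
            apply mul_le_mul_of_nonneg_left _ (by positivity)
            rw [← h2]; exact h1
          have h4 : 3*π^2 ≤ 2*π*(k:ℝ) * ((3/4)*(2*π*(k:ℝ))) := by
            have hk2 : (1:ℝ) ≤ (k:ℝ)^2 := by nlinarith
            nlinarith [pi_pos]
          linarith
  · have hGlb := keyG w g hwc hgcont hderiv hgle hw1 hs1 h12 hs2 hηpos hgs hcase.le
    rw [← hG, ← hm] at hGlb
    calc min (3*π^2) (η*m/ν) ≤ η*m/ν := min_le_right _ _
      _ ≤ 2*π*(k:ℝ) * (1/(δ*ν) * G) := by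
          have hE : 2*π*(k:ℝ) * (1/(δ*ν) * G) = a*G/(δ^2*ν) := by
            rw [haa]; field_simp
          rw [hE]
          have h1 : η*m/ν ≤ η*m/(δ^2*ν) := by
            apply div_le_div_of_nonneg_left (le_of_lt (mul_pos hηpos hmpos)) hδ2ν
            nlinarith [mul_nonneg (le_of_lt hνpos) (by nlinarith : (0:ℝ) ≤ 1 - δ^2)]
          have h2 : η*m/(δ^2*ν) ≤ a*G/(δ^2*ν) :=
            div_le_div_of_nonneg_right hGlb hδ2ν.le
          linarith
end

section
/- Nonlinear nonlocal Poincaré-type inequality: let $w_\delta$ on $[0,\delta]$ ($0<\delta\leq 1$) be $\mathbf{C}^1$, nonnegative, non-increasing, with $\int_0^\delta w_\delta = 1$, and let $\rho : \mathbb{R} \to \mathbb{R}$ be $\mathbf{C}^1$, 1-periodic, with $\rho(x) \geq \rho_{\min} \geq 0$ for all $x$. Then $\int_0^1 \rho(x)\, \rho'(x)\, \mathcal{D}_x^\delta\rho(x)\,dx \geq \rho_{\min} \int_0^1 \rho'(x)\, \mathcal{D}_x^\delta\rho(x)\,dx$, where $\mathcal{D}_x^\delta\rho(x) = \frac{1}{\nu(\delta)}\int_0^\delta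 [\rho(x+s) - \rho(x)]\, w_\delta(s)\,ds$ and $\nu(\delta) = \int_0^\delta s\, w_\delta(s)\,ds > 0$. -/
open Real Set MeasureTheory intervalIntegral Filter Topology

lemma amgm_helper (a b : ℝ) (ha : 0 ≤ a) (hb : 0 ≤ b) :
    a ^ 2 * b ≤ 2/3 * a ^ 3 + 1/3 * b ^ 3 := by
  nlinarith [mul_nonneg (sq_nonneg (a - b)) (by linarith : (0:ℝ) ≤ 2 * a + b)]

lemma swap_helper {F : ℝ → ℝ → ℝ} (hF : Continuous fun p : ℝ × ℝ => F p.1 p.2)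
    {a b c d : ℝ} (hab : a ≤ b) (hcd : c ≤ d) :
    (∫ x in a..b, ∫ s in c..d, F x s) = ∫ s in c..d, ∫ x in a..b, F x s := by
  rw [intervalIntegral.integral_of_le hab, intervalIntegral.integral_of_le hcd]
  simp_rw [intervalIntegral.integral_of_le hab, intervalIntegral.integral_of_le hcd]
  apply MeasureTheory.integral_integral_swap
  rw [Measure.prod_restrict]
  apply ((hF.continuousOn.integrableOn_compact (isCompact_Icc.prod isCompact_Icc))).mono_set
  exact Set.prod_mono Ioc_subset_Icc_self Ioc_subset_Icc_self

theorem stmt11 (δ : ℝ) (hδ : 0 < δ) (hδ1 : δ ≤ 1) (w : ℝ → ℝ)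
    (hw : ContDiffOn ℝ 1 w (Icc 0 δ))
    (hpos : ∀ s ∈ Icc 0 δ, 0 ≤ w s)
    (hmono : AntitoneOn w (Icc 0 δ))
    (hnorm : (∫ s in (0:ℝ)..δ, w s) = 1)
    (ν : ℝ) (hν : ν = ∫ s in (0:ℝ)..δ, s * w s) (hνpos : 0 < ν)
    (ρ : ℝ → ℝ) (hρ : ContDiff ℝ 1 ρ) (hper : Function.Periodic ρ 1)
    (ρmin : ℝ) (hρmin : 0 ≤ ρmin) (hlow : ∀ x, ρmin ≤ ρ x) :
    ρmin * ∫ x in (0:ℝ)..1, deriv ρ x * ((1 / ν) * ∫ s in (0:ℝ)..δ, (ρ (x + s) - ρ x) * w s) ≤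
      ∫ x in (0:ℝ)..1, ρ x * deriv ρ x * ((1 / ν) * ∫ s in (0:ℝ)..δ, (ρ (x + s) - ρ x) * w s) := by
  -- basic facts about ρ and g
  have hρdiff : Differentiable ℝ ρ := hρ.differentiable one_ne_zero
  set ρ' : ℝ → ℝ := deriv ρ with hρ'def
  have hρd : ∀ x, HasDerivAt ρ (ρ' x) x := fun x => (hρdiff x).hasDerivAt
  have hρc : Continuous ρ := hρ.continuous
  have hρ'c : Continuous ρ' := hρ.continuous_deriv le_rfl
  set g : ℝ → ℝ := fun x => ρ x - ρmin with hgdef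
  have hgc : Continuous g := hρc.sub continuous_const
  have hgd : ∀ x, HasDerivAt g (ρ' x) x := fun x => (hρd x).sub_const _
  have hgper : Function.Periodic g 1 := fun x => by simp [hgdef, hper x]
  have hg0 : ∀ x, 0 ≤ g x := fun x => sub_nonneg.2 (hlow x)
  have hg10 : g 1 = g 0 := by simpa using hgper 0
  -- clamp function and extensions W, V of w and its derivative v
  set c : ℝ → ℝ := fun s => max 0 (min s δ) with hcdef
  have hcc : Continuous c := continuous_const.max (continuous_id.min continuous_const)
  have hcmem : ∀ s, c s ∈ Icc 0 δ := fun s =>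
    ⟨le_max_left _ _, max_le hδ.le (min_le_right _ _)⟩
  have hcid : ∀ s ∈ Icc 0 δ, c s = s := fun s hs => by
    simp only [hcdef]; rw [min_eq_left hs.2, max_eq_right hs.1]
  set W : ℝ → ℝ := fun s => w (c s) with hWdef
  have hWc : Continuous W := hw.continuousOn.comp_continuous hcc hcmem
  have hWeq : ∀ s ∈ Icc 0 δ, W s = w s := fun s hs => by simp only [hWdef, hcid s hs]
  set v : ℝ → ℝ := derivWithin w (Icc 0 δ) with hvdef
  have hvcont : ContinuousOn v (Icc 0 δ) := hw.continuousOn_derivWithin (uniqueDiffOn_Icc hδ) le_rfl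
  set V : ℝ → ℝ := fun s => v (c s) with hVdef
  have hVc : Continuous V := hvcont.comp_continuous hcc hcmem
  have hVeq : ∀ s ∈ Icc 0 δ, V s = v s := fun s hs => by simp only [hVdef, hcid s hs]
  have hwdiff : ∀ s ∈ Icc 0 δ, HasDerivWithinAt w (v s) (Icc 0 δ) s := fun s hs =>
    ((hw.differentiableOn one_ne_zero) s hs).hasDerivWithinAt
  have hwdAt : ∀ s ∈ Ioo 0 δ, HasDerivAt w (v s) s := fun s hs =>
    (hwdiff s (Ioo_subset_Icc_self hs)).hasDerivAt (Icc_mem_nhds hs.1 hs.2)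
  have hWdAt : ∀ s ∈ Ioo 0 δ, HasDerivAt W (V s) s := by
    intro s hs
    rw [hVeq s (Ioo_subset_Icc_self hs)]
    refine (hwdAt s hs).congr_of_eventuallyEq ?_
    filter_upwards [Ioo_mem_nhds hs.1 hs.2] with y hy
    exact hWeq y (Ioo_subset_Icc_self hy)
  have hvle : ∀ s ∈ Icc 0 δ, v s ≤ 0 := by
    intro s hs
    have hd := hwdiff s hs
    rw [hasDerivWithinAt_iff_tendsto_slope] at hd
    have hsl : ∀ y ∈ Icc 0 δ \ {s}, slope w s y ≤ 0 := by
      intro y hy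
      obtain ⟨hyI, hys⟩ := hy
      rw [slope_def_field]
      rcases lt_or_gt_of_ne (fun h : y = s => hys (by simp [h])) with h | h
      · exact div_nonpos_iff.2 (Or.inl ⟨sub_nonneg.2 (hmono hyI hs h.le), by linarith⟩)
      · exact div_nonpos_iff.2 (Or.inr ⟨sub_nonpos.2 (hmono hs hyI h.le), by linarith⟩)
    rcases lt_or_eq_of_le hs.2 with h | h
    · have hsub : Ioc s δ ⊆ Icc 0 δ \ {s} := fun y hy =>
        ⟨⟨hs.1.trans hy.1.le, hy.2⟩, by simpa using hy.1.ne'⟩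
      haveI : (𝓝[Ioc s δ] s).NeBot := by
        rw [nhdsWithin_Ioc_eq_nhdsGT h]; infer_instance
      refine le_of_tendsto (hd.mono_left (nhdsWithin_mono _ hsub)) ?_
      exact eventually_mem_nhdsWithin.mono fun y hy => hsl y (hsub hy)
    · have hsub : Ico 0 δ ⊆ Icc 0 δ \ {s} := fun y hy =>
        ⟨⟨hy.1, hy.2.le⟩, by simpa using h ▸ hy.2.ne⟩
      haveI : (𝓝[Ico 0 δ] s).NeBot := by
        rw [h, nhdsWithin_Ico_eq_nhdsLT hδ]; infer_instance
      refine le_of_tendsto (hd.mono_left (nhdsWithin_mono _ hsub)) ?_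
      exact eventually_mem_nhdsWithin.mono fun y hy => hsl y (hsub hy)
  have hVle : ∀ s ∈ Icc 0 δ, V s ≤ 0 := fun s hs => (hVeq s hs) ▸ hvle s hs
  -- continuity of shifted compositions
  have hshift : Continuous fun p : ℝ × ℝ => g (p.1 + p.2) := hgc.comp (continuous_fst.add continuous_snd)
  have hshift' : Continuous fun p : ℝ × ℝ => ρ' (p.1 + p.2) := hρ'c.comp (continuous_fst.add continuous_snd)
  -- main quantities
  set J : ℝ → ℝ := fun x => ∫ s in (0:ℝ)..δ, (g (x + s) - g x) * W s with hJdef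
  set B : ℝ → ℝ := fun s => ∫ x in (0:ℝ)..1, g x * ρ' x * g (x + s) with hBdef
  set E : ℝ → ℝ := fun s => ∫ x in (0:ℝ)..1, g x ^ 2 * ρ' (x + s) with hEdef
  set C : ℝ → ℝ := fun s => ∫ x in (0:ℝ)..1, g x ^ 2 * g (x + s) with hCdef
  set C0 : ℝ := ∫ x in (0:ℝ)..1, g x ^ 3 with hC0def
  have hJρ : ∀ x, (∫ s in (0:ℝ)..δ, (ρ (x + s) - ρ x) * w s) = J x := by
    intro x
    refine intervalIntegral.integral_congr fun s hs => ?_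
    rw [uIcc_of_le hδ.le] at hs
    rw [hWeq s hs]; simp only [hgdef]; ring
  have hJc : Continuous J := by
    apply intervalIntegral.continuous_parametric_intervalIntegral_of_continuous'
    exact ((hshift.sub (hgc.comp continuous_fst))).mul (hWc.comp continuous_snd)
  have hBc : Continuous B := by
    apply intervalIntegral.continuous_parametric_intervalIntegral_of_continuous'
      (f := fun s x => g x * ρ' x * g (x + s))
    exact (((hgc.comp continuous_snd).mul (hρ'c.comp continuous_snd)).mul
      (hgc.comp (continuous_snd.add continuous_fst)))
  have hEc : Continuous E := by
    apply intervalIntegral.continuous_parametric_intervalIntegral_of_continuous'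
      (f := fun s x => g x ^ 2 * ρ' (x + s))
    exact (((hgc.comp continuous_snd).pow 2).mul (hρ'c.comp (continuous_snd.add continuous_fst)))
  have hCc : Continuous C := by
    apply intervalIntegral.continuous_parametric_intervalIntegral_of_continuous'
      (f := fun s x => g x ^ 2 * g (x + s))
    exact (((hgc.comp continuous_snd).pow 2).mul (hgc.comp (continuous_snd.add continuous_fst)))
  -- ∫ g² ρ' = 0
  have hz : (∫ x in (0:ℝ)..1, g x ^ 2 * ρ' x) = 0 := by
    have h : ∀ x ∈ uIcc (0:ℝ) 1, HasDerivAt (fun y => g y ^ 3 / 3) (g x ^ 2 * ρ' x) x := by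
      intro x _
      have := ((hgd x).fun_pow 3).div_const 3
      refine this.congr_deriv ?_
      push_cast; ring
    rw [intervalIntegral.integral_eq_sub_of_hasDerivAt h
      (((hgc.pow 2).mul hρ'c).intervalIntegrable _ _)]
    rw [hg10]; ring
  have hgsc : ∀ s : ℝ, Continuous fun x => g (x + s) := fun s =>
    hgc.comp (continuous_id.add continuous_const)
  have hρ'sc : ∀ s : ℝ, Continuous fun x => ρ' (x + s) := fun s =>
    hρ'c.comp (continuous_id.add continuous_const)
  -- step 1 : T = ∫ W * B
  have step1 : (∫ x in (0:ℝ)..1, g x * ρ' x * J x) = ∫ s in (0:ℝ)..δ, W s * B s := by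
    have hcont : Continuous fun p : ℝ × ℝ =>
        g p.1 * ρ' p.1 * ((g (p.1 + p.2) - g p.1) * W p.2) :=
      ((hgc.comp continuous_fst).mul (hρ'c.comp continuous_fst)).mul
        ((hshift.sub (hgc.comp continuous_fst)).mul (hWc.comp continuous_snd))
    have e1 : (∫ x in (0:ℝ)..1, g x * ρ' x * J x)
        = ∫ x in (0:ℝ)..1, ∫ s in (0:ℝ)..δ, g x * ρ' x * ((g (x + s) - g x) * W s) := by
      refine intervalIntegral.integral_congr fun x _ => ?_
      exact (intervalIntegral.integral_const_mul _ _).symm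
    rw [e1, swap_helper hcont zero_le_one hδ.le]
    refine intervalIntegral.integral_congr fun s _ => ?_
    have e2 : (fun x => g x * ρ' x * ((g (x + s) - g x) * W s))
        = fun x => W s * (g x * ρ' x * g (x + s)) - W s * (g x ^ 2 * ρ' x) :=
      funext fun x => by ring
    rw [e2, intervalIntegral.integral_sub
        ((continuous_const.fun_mul ((hgc.fun_mul hρ'c).fun_mul (hgsc s))).intervalIntegrable _ _)
        ((continuous_const.fun_mul ((hgc.fun_pow 2).fun_mul hρ'c)).intervalIntegrable _ _),
      intervalIntegral.integral_const_mul, intervalIntegral.integral_const_mul, hz,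
      mul_zero, sub_zero]
  -- B s = -(1/2) E s
  have hBE : ∀ s, B s = -(1/2) * E s := by
    intro s
    have h : ∀ x ∈ uIcc (0:ℝ) 1, HasDerivAt (fun y => g y ^ 2 * g (y + s))
        (2 * (g x * ρ' x * g (x + s)) + g x ^ 2 * ρ' (x + s)) x := by
      intro x _
      have h1 : HasDerivAt (fun y => g (y + s)) (ρ' (x + s)) x :=
        HasDerivAt.comp_add_const x s (hgd (x + s))
      have h2 : HasDerivAt (fun y => g y ^ 2) (2 * g x * ρ' x) x := by
        have := (hgd x).fun_pow 2
        refine this.congr_deriv ?_; push_cast; ring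
      have := h2.fun_mul h1
      refine this.congr_deriv ?_; ring
    have h0 := intervalIntegral.integral_eq_sub_of_hasDerivAt h
      (((continuous_const.mul ((hgc.mul hρ'c).mul (hgsc s))).add
        ((hgc.pow 2).mul (hρ'sc s))).intervalIntegrable _ _)
    have e1 : g (1 + s) = g s := by rw [add_comm]; exact hgper s
    rw [intervalIntegral.integral_add
        ((continuous_const.fun_mul ((hgc.fun_mul hρ'c).fun_mul (hgsc s))).intervalIntegrable _ _)
        (((hgc.fun_pow 2).fun_mul (hρ'sc s)).intervalIntegrable _ _),
      intervalIntegral.integral_const_mul] at h0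
    rw [e1, hg10, zero_add] at h0
    have : 2 * B s + E s = 0 := by rw [hBdef, hEdef]; simpa using h0
    linarith
  -- step 3 : ∫ W E = ∫ g² Q
  have step3 : (∫ s in (0:ℝ)..δ, W s * E s)
      = ∫ x in (0:ℝ)..1, g x ^ 2 * (∫ s in (0:ℝ)..δ, W s * ρ' (x + s)) := by
    have hcont2 : Continuous fun p : ℝ × ℝ => W p.1 * (g p.2 ^ 2 * ρ' (p.2 + p.1)) :=
      (hWc.comp continuous_fst).mul (((hgc.comp continuous_snd).pow 2).mul
        (hρ'c.comp (continuous_snd.add continuous_fst)))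
    have e1 : (∫ s in (0:ℝ)..δ, W s * E s)
        = ∫ s in (0:ℝ)..δ, ∫ x in (0:ℝ)..1, W s * (g x ^ 2 * ρ' (x + s)) := by
      refine intervalIntegral.integral_congr fun s _ => ?_
      exact (intervalIntegral.integral_const_mul _ _).symm
    rw [e1, swap_helper hcont2 hδ.le zero_le_one]
    refine intervalIntegral.integral_congr fun x _ => ?_
    rw [← intervalIntegral.integral_const_mul]
    refine intervalIntegral.integral_congr fun s _ => by ring
  -- IBP in s
  have hQ : ∀ x, (∫ s in (0:ℝ)..δ, W s * ρ' (x + s))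
      = w δ * g (x + δ) - w 0 * g x - ∫ s in (0:ℝ)..δ, V s * g (x + s) := by
    intro x
    have hgxc : Continuous fun s => g (x + s) := hgc.comp (continuous_const.add continuous_id)
    have hρ'xc : Continuous fun s => ρ' (x + s) := hρ'c.comp (continuous_const.add continuous_id)
    have hfc : ContinuousOn (fun s => W s * g (x + s)) (Icc 0 δ) :=
      (hWc.mul hgxc).continuousOn
    have hder : ∀ s ∈ Ioo 0 δ, HasDerivWithinAt (fun s => W s * g (x + s))
        (V s * g (x + s) + W s * ρ' (x + s)) (Ioi s) s := by
      intro s hs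
      have h1 : HasDerivAt (fun s => g (x + s)) (ρ' (x + s)) s :=
        HasDerivAt.comp_const_add x s (hgd (x + s))
      exact ((hWdAt s hs).mul h1).hasDerivWithinAt
    have h0 := intervalIntegral.integral_eq_sub_of_hasDeriv_right_of_le hδ.le hfc hder
      (((hVc.mul hgxc).add (hWc.mul hρ'xc)).intervalIntegrable _ _)
    rw [intervalIntegral.integral_add ((hVc.fun_mul hgxc).intervalIntegrable _ _)
        ((hWc.fun_mul hρ'xc).intervalIntegrable _ _)] at h0
    rw [hWeq δ ⟨hδ.le, le_rfl⟩, hWeq 0 ⟨le_rfl, hδ.le⟩, add_zero] at h0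
    linarith
  have step4 : (∫ x in (0:ℝ)..1, g x ^ 2 * (∫ s in (0:ℝ)..δ, W s * ρ' (x + s)))
      = w δ * C δ - w 0 * C0 - ∫ s in (0:ℝ)..δ, V s * C s := by
    have hRc : Continuous fun x => ∫ s in (0:ℝ)..δ, V s * g (x + s) := by
      apply intervalIntegral.continuous_parametric_intervalIntegral_of_continuous'
        (f := fun x s => V s * g (x + s))
      exact (hVc.comp continuous_snd).mul (hgc.comp (continuous_fst.add continuous_snd))
    have hcont3 : Continuous fun p : ℝ × ℝ => g p.1 ^ 2 * (V p.2 * g (p.1 + p.2)) :=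
      ((hgc.comp continuous_fst).pow 2).mul ((hVc.comp continuous_snd).mul hshift)
    have e2 : (∫ x in (0:ℝ)..1, g x ^ 2 * ∫ s in (0:ℝ)..δ, V s * g (x + s))
        = ∫ s in (0:ℝ)..δ, V s * C s := by
      have c1 : (∫ x in (0:ℝ)..1, g x ^ 2 * ∫ s in (0:ℝ)..δ, V s * g (x + s))
          = ∫ x in (0:ℝ)..1, ∫ s in (0:ℝ)..δ, g x ^ 2 * (V s * g (x + s)) := by
        refine intervalIntegral.integral_congr fun x _ => ?_
        exact (intervalIntegral.integral_const_mul _ _).symm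
      rw [c1, swap_helper hcont3 zero_le_one hδ.le]
      refine intervalIntegral.integral_congr fun s _ => ?_
      have c2 : V s * C s = ∫ x in (0:ℝ)..1, V s * (g x ^ 2 * g (x + s)) :=
        (intervalIntegral.integral_const_mul _ _).symm
      rw [c2]
      refine intervalIntegral.integral_congr fun x _ => by ring
    have e1 : (∫ x in (0:ℝ)..1, g x ^ 2 * (∫ s in (0:ℝ)..δ, W s * ρ' (x + s)))
        = ∫ x in (0:ℝ)..1, (w δ * (g x ^ 2 * g (x + δ)) - w 0 * g x ^ 3
            - g x ^ 2 * (∫ s in (0:ℝ)..δ, V s * g (x + s))) := by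
      refine intervalIntegral.integral_congr fun x _ => ?_
      rw [hQ x]; ring
    rw [e1, intervalIntegral.integral_sub
        (((continuous_const.fun_mul ((hgc.fun_pow 2).fun_mul (hgsc δ))).fun_sub
          (continuous_const.fun_mul (hgc.fun_pow 3))).intervalIntegrable _ _)
        (((hgc.fun_pow 2).fun_mul hRc).intervalIntegrable _ _),
      intervalIntegral.integral_sub
        ((continuous_const.fun_mul ((hgc.fun_pow 2).fun_mul (hgsc δ))).intervalIntegrable _ _)
        ((continuous_const.fun_mul (hgc.fun_pow 3)).intervalIntegrable _ _),
      intervalIntegral.integral_const_mul, intervalIntegral.integral_const_mul, e2]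
  have hVint : (∫ s in (0:ℝ)..δ, V s) = w δ - w 0 := by
    have h0 := intervalIntegral.integral_eq_sub_of_hasDeriv_right_of_le hδ.le hWc.continuousOn
      (fun s hs => (hWdAt s hs).hasDerivWithinAt) (hVc.intervalIntegrable _ _)
    rw [hWeq δ ⟨hδ.le, le_rfl⟩, hWeq 0 ⟨le_rfl, hδ.le⟩] at h0
    exact h0
  have hCle : ∀ s, C s ≤ C0 := by
    intro s
    have hAM : ∀ x ∈ Icc (0:ℝ) 1, g x ^ 2 * g (x + s) ≤ 2/3 * g x ^ 3 + 1/3 * g (x + s) ^ 3 := by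
      intro x _
      exact amgm_helper _ _ (hg0 x) (hg0 (x + s))
    have h1 : C s ≤ ∫ x in (0:ℝ)..1, (2/3 * g x ^ 3 + 1/3 * g (x + s) ^ 3) := by
      refine intervalIntegral.integral_mono_on zero_le_one
        (((hgc.pow 2).mul (hgsc s)).intervalIntegrable _ _)
        (((continuous_const.mul (hgc.pow 3)).add
          (continuous_const.mul ((hgsc s).pow 3))).intervalIntegrable _ _) hAM
    have h2 : (∫ x in (0:ℝ)..1, g (x + s) ^ 3) = C0 := by
      rw [intervalIntegral.integral_comp_add_right (fun u => g u ^ 3) s]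
      have hper3 : Function.Periodic (fun u : ℝ => g u ^ 3) 1 := fun x => by simp [hgper x]
      have h3 := hper3.intervalIntegral_add_eq s 0
      rw [hC0def]
      simp only [zero_add] at h3 ⊢
      rw [show (1:ℝ) + s = s + 1 by ring]
      exact h3
    rw [intervalIntegral.integral_add
        ((continuous_const.fun_mul (hgc.fun_pow 3)).intervalIntegrable _ _)
        ((continuous_const.fun_mul ((hgsc s).fun_pow 3)).intervalIntegrable _ _),
      intervalIntegral.integral_const_mul, intervalIntegral.integral_const_mul, h2] at h1
    have : (∫ x in (0:ℝ)..1, g x ^ 3) = C0 := rfl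
    rw [this] at h1
    linarith
  -- assemble
  have hWE : (∫ s in (0:ℝ)..δ, W s * E s) ≤ 0 := by
    rw [step3, step4]
    have hmon : (∫ s in (0:ℝ)..δ, V s * C0) ≤ ∫ s in (0:ℝ)..δ, V s * C s := by
      refine intervalIntegral.integral_mono_on hδ.le
        ((hVc.mul continuous_const).intervalIntegrable _ _)
        ((hVc.mul hCc).intervalIntegrable _ _) fun s hs => ?_
      exact mul_le_mul_of_nonpos_left (hCle s) (hVle s hs)
    rw [intervalIntegral.integral_mul_const, hVint] at hmon
    have hwδ : 0 ≤ w δ := hpos δ ⟨hδ.le, le_rfl⟩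
    nlinarith [hCle δ]
  have key : 0 ≤ ∫ x in (0:ℝ)..1, g x * ρ' x * J x := by
    rw [step1]
    have : (∫ s in (0:ℝ)..δ, W s * B s) = -(1/2) * ∫ s in (0:ℝ)..δ, W s * E s := by
      rw [← intervalIntegral.integral_const_mul]
      refine intervalIntegral.integral_congr fun s _ => ?_
      rw [hBE s]; ring
    rw [this]; nlinarith [hWE]
  simp only [hJρ]
  have hint1 : IntervalIntegrable (fun x => (1/ν) * (g x * ρ' x * J x)) volume 0 1 :=
    (continuous_const.mul ((hgc.mul hρ'c).mul hJc)).intervalIntegrable _ _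
  have hint2 : IntervalIntegrable (fun x => ρmin * (ρ' x * ((1/ν) * J x))) volume 0 1 :=
    (continuous_const.mul (hρ'c.mul (continuous_const.mul hJc))).intervalIntegrable _ _
  have hsplit : (∫ x in (0:ℝ)..1, ρ x * ρ' x * ((1/ν) * J x))
      = (1/ν) * (∫ x in (0:ℝ)..1, g x * ρ' x * J x)
        + ρmin * ∫ x in (0:ℝ)..1, ρ' x * ((1/ν) * J x) := by
    rw [← intervalIntegral.integral_const_mul, ← intervalIntegral.integral_const_mul,
      ← intervalIntegral.integral_add hint1 hint2]
    refine intervalIntegral.integral_congr fun x _ => ?_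
    simp only [hgdef]; ring
  rw [hsplit]
  have : 0 ≤ (1/ν) * ∫ x in (0:ℝ)..1, g x * ρ' x * J x :=
    mul_nonneg (by positivity) key
  linarith
end

section
/- Local reduction for the triangular kernel: let $\delta = 1$ and $w_\delta(s) = 2(1-s)$ on $[0,1]$. For any $\mathbf{C}^1$ 1-periodic function $\rho$ with mean $\bar\rho$, the nonlocal gradient $\mathcal{D}_x^\delta\rho(x) = 6\int_0^1 (1-s)[\rho(x+s) - \rho(x)]\,ds$ satisfies $\partial_x \mathcal{D}_x^\delta\rho(x) = -6(\rho(x) - \bar\rho) - 3\rho'(x)$, and consequently $\int_0^1 \rho'(x)\, \mathcal{D}_x^\delta\rho(x)\,dx = 6\int_0^1 (\rho(x) - \bar\rho)^2\,dx$. -/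
open Real Set MeasureTheory intervalIntegral

theorem stmt16 (ρ : ℝ → ℝ) (hρ : ContDiff ℝ 1 ρ) (hper : Function.Periodic ρ 1)
    (ρbar : ℝ) (hbar : ρbar = ∫ x in (0:ℝ)..1, ρ x)
    (D : ℝ → ℝ) (hD : ∀ x, D x = 6 * ∫ s in (0:ℝ)..1, (1 - s) * (ρ (x + s) - ρ x)) :
    (∀ x, deriv D x = -6 * (ρ x - ρbar) - 3 * deriv ρ x) ∧
    (∫ x in (0:ℝ)..1, deriv ρ x * D x) = 6 * ∫ x in (0:ℝ)..1, (ρ x - ρbar)^2 := by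
  have hρc : Continuous ρ := hρ.continuous
  have hρ'c : Continuous (deriv ρ) := hρ.continuous_deriv le_rfl
  have hρd : ∀ x, HasDerivAt ρ (deriv ρ x) x := fun x =>
    (hρ.differentiable one_ne_zero x).hasDerivAt
  have hgc : Continuous (fun u : ℝ => u * ρ u) := continuous_id.mul hρc
  -- the periodic integral of ρ over any period equals ρbar
  have hGper : ∀ x : ℝ, (∫ u in x..x + 1, ρ u) = ρbar := by
    intro x
    rw [hbar]
    simpa using hper.intervalIntegral_add_eq x 0
  -- rewrite D
  have hDeq : ∀ x, D x = 6 * (1 + x) * ρbar - 6 * (∫ u in x..x + 1, u * ρ u) - 3 * ρ x := by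
    intro x
    rw [hD]
    have hint1 : IntervalIntegrable (fun s => (1 - s) * ρ (x + s)) volume 0 1 :=
      (((continuous_const.sub continuous_id).mul
        (hρc.comp (continuous_const.add continuous_id)))).intervalIntegrable 0 1
    have hint2 : IntervalIntegrable (fun s => (1 - s) * ρ x) volume 0 1 :=
      ((continuous_const.sub continuous_id).mul continuous_const).intervalIntegrable 0 1
    have hsplit : (∫ s in (0:ℝ)..1, (1 - s) * (ρ (x + s) - ρ x))
        = (∫ s in (0:ℝ)..1, (1 - s) * ρ (x + s)) - ∫ s in (0:ℝ)..1, (1 - s) * ρ x := by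
      rw [← intervalIntegral.integral_sub hint1 hint2]
      congr 1; funext s; ring
    have hconst : (∫ s in (0:ℝ)..1, (1 - s) * ρ x) = ρ x / 2 := by
      rw [intervalIntegral.integral_mul_const]
      have : (∫ s in (0:ℝ)..1, (1 - s)) = 1 / 2 := by
        rw [intervalIntegral.integral_sub intervalIntegrable_const intervalIntegrable_id]
        norm_num
      rw [this]; ring
    have hsub : (∫ s in (0:ℝ)..1, (1 - s) * ρ (x + s))
        = ∫ u in x..x + 1, (1 + x - u) * ρ u := by
      have := intervalIntegral.integral_comp_add_left (a := (0:ℝ)) (b := 1)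
        (fun u => (1 + x - u) * ρ u) x
      simp only [add_zero] at this
      rw [← this]
      congr 1; funext s; ring_nf
    have hsplit2 : (∫ u in x..x + 1, (1 + x - u) * ρ u)
        = (1 + x) * (∫ u in x..x + 1, ρ u) - ∫ u in x..x + 1, u * ρ u := by
      rw [← intervalIntegral.integral_const_mul, ← intervalIntegral.integral_sub
        (f := fun u => (1 + x) * ρ u) (g := fun u => u * ρ u) ((continuous_const.mul hρc).intervalIntegrable _ _) (hgc.intervalIntegrable _ _)]
      congr 1; funext u; ring
    rw [hsplit, hconst, hsub, hsplit2, hGper x]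
    ring
  -- derivative of D
  have hHd : ∀ x : ℝ, HasDerivAt (fun y => ∫ u in y..y + 1, u * ρ u) (ρ x) x := by
    intro x
    have heq : (fun y : ℝ => ∫ u in y..y + 1, u * ρ u)
        = fun y => (∫ u in (0:ℝ)..(y + 1), u * ρ u) - ∫ u in (0:ℝ)..y, u * ρ u := by
      funext y
      rw [eq_sub_iff_add_eq, add_comm,
        intervalIntegral.integral_add_adjacent_intervals (hgc.intervalIntegrable _ _)
          (hgc.intervalIntegrable _ _)]
    rw [heq]
    have h1 : HasDerivAt (fun y : ℝ => ∫ u in (0:ℝ)..y, u * ρ u) (x * ρ x) x :=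
      intervalIntegral.integral_hasDerivAt_right (hgc.intervalIntegrable _ _)
        hgc.aestronglyMeasurable.stronglyMeasurableAtFilter hgc.continuousAt
    have h2 : HasDerivAt (fun y : ℝ => ∫ u in (0:ℝ)..(y + 1), u * ρ u)
        ((x + 1) * ρ (x + 1)) x := by
      have h3 : HasDerivAt (fun y : ℝ => ∫ u in (0:ℝ)..y, u * ρ u)
          ((x + 1) * ρ (x + 1)) (x + 1) :=
        intervalIntegral.integral_hasDerivAt_right (hgc.intervalIntegrable _ _)
          hgc.aestronglyMeasurable.stronglyMeasurableAtFilter hgc.continuousAt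
      rw [← mul_one ((x + 1) * ρ (x + 1))]
      exact h3.comp x ((hasDerivAt_id x).add_const 1)
    have := h2.sub h1
    have hval : (x + 1) * ρ (x + 1) - x * ρ x = ρ x := by
      rw [hper x]; ring
    rwa [hval] at this
  have hDd : ∀ x, HasDerivAt D (-6 * (ρ x - ρbar) - 3 * deriv ρ x) x := by
    intro x
    have heq : D = fun x => 6 * (1 + x) * ρbar - 6 * (∫ u in x..x + 1, u * ρ u) - 3 * ρ x :=
      funext hDeq
    rw [heq]
    have h1 : HasDerivAt (fun x : ℝ => 6 * (1 + x) * ρbar) (6 * ρbar) x := by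
      have := (((hasDerivAt_id x).const_add 1).const_mul 6).mul_const ρbar
      simpa using this
    have := (h1.sub ((hHd x).const_mul 6)).sub ((hρd x).const_mul 3)
    exact this.congr_deriv (by ring)
  refine ⟨fun x => (hDd x).deriv, ?_⟩
  have hρ10 : ρ 1 = ρ 0 := by simpa using hper 0
  -- periodicity of D
  have hD10 : D 1 = D 0 := by
    rw [hD, hD]
    congr 1
    apply intervalIntegral.integral_congr
    intro s _
    show (1 - s) * (ρ (1 + s) - ρ 1) = (1 - s) * (ρ (0 + s) - ρ 0)
    have h1 : (1:ℝ) + s = s + 1 := by ring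
    rw [zero_add, h1, hper s, hρ10]
  -- integration by parts
  have hDc : Continuous (fun x => -6 * (ρ x - ρbar) - 3 * deriv ρ x) :=
    (continuous_const.mul (hρc.sub continuous_const)).sub (continuous_const.mul hρ'c)
  have hibp := intervalIntegral.integral_mul_deriv_eq_deriv_mul
    (u := ρ) (v := D) (u' := deriv ρ) (v' := fun x => -6 * (ρ x - ρbar) - 3 * deriv ρ x)
    (a := 0) (b := 1) (fun x _ => hρd x) (fun x _ => hDd x)
    (hρ'c.intervalIntegrable 0 1) (hDc.intervalIntegrable 0 1)
  rw [hρ10, hD10, sub_self, zero_sub] at hibp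
  have hibp' : (∫ x in (0:ℝ)..1, deriv ρ x * D x)
      = -(∫ x in (0:ℝ)..1, ρ x * (-6 * (ρ x - ρbar) - 3 * deriv ρ x)) := by
    have := hibp
    linarith
  rw [hibp']
  -- compute -∫ ρ * D'
  have hA : IntervalIntegrable (fun x => ρ x * (ρ x - ρbar)) volume 0 1 :=
    (hρc.mul (hρc.sub continuous_const)).intervalIntegrable 0 1
  have hB : IntervalIntegrable (fun x => ρ x * deriv ρ x) volume 0 1 :=
    (hρc.mul hρ'c).intervalIntegrable 0 1
  have hsplit : (∫ x in (0:ℝ)..1, ρ x * (-6 * (ρ x - ρbar) - 3 * deriv ρ x))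
      = -6 * (∫ x in (0:ℝ)..1, ρ x * (ρ x - ρbar)) - 3 * ∫ x in (0:ℝ)..1, ρ x * deriv ρ x := by
    rw [← intervalIntegral.integral_const_mul, ← intervalIntegral.integral_const_mul,
      ← intervalIntegral.integral_sub (hA.const_mul _) (hB.const_mul _)]
    congr 1; funext x; ring
  have hBzero : (∫ x in (0:ℝ)..1, ρ x * deriv ρ x) = 0 := by
    have hd : ∀ x ∈ uIcc (0:ℝ) 1, HasDerivAt (fun y => ρ y ^ 2 / 2) (ρ x * deriv ρ x) x := by
      intro x _
      have := ((hρd x).pow 2).div_const 2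
      exact this.congr_deriv (by rw [show (2:ℕ) - 1 = 1 from rfl]; push_cast; ring)
    rw [intervalIntegral.integral_eq_sub_of_hasDerivAt hd hB, hρ10, sub_self]
  have hAeq : (∫ x in (0:ℝ)..1, ρ x * (ρ x - ρbar)) = ∫ x in (0:ℝ)..1, (ρ x - ρbar) ^ 2 := by
    have h1 : (∫ x in (0:ℝ)..1, (ρ x - ρbar) ^ 2)
        = (∫ x in (0:ℝ)..1, ρ x * (ρ x - ρbar)) - ρbar * ∫ x in (0:ℝ)..1, (ρ x - ρbar) := by
      rw [← intervalIntegral.integral_const_mul,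
        ← intervalIntegral.integral_sub (g := fun x => ρbar * (ρ x - ρbar)) hA (((hρc.sub continuous_const).intervalIntegrable 0 1).const_mul _)]
      congr 1; funext x; ring
    have h2 : (∫ x in (0:ℝ)..1, (ρ x - ρbar)) = 0 := by
      rw [intervalIntegral.integral_sub (hρc.intervalIntegrable 0 1) intervalIntegrable_const,
        ← hbar]
      simp
    rw [h2, mul_zero, sub_zero] at h1
    exact h1.symm
  rw [hsplit, hBzero, hAeq]
  ring
end

section
/- Counterexample with the constant kernel: let $\delta = 1/m$ for a positive integer $m$, $w_\delta(s) = 1/\delta$ on $[0,\delta]$, and let $\rho_0 : \mathbb{R} \to \mathbb{R}$ be a $\mathbf{C}^1$ function that is periodic with period $\delta$ and has mean $\bar\rho = \delta^{-1}\int_0^\delta \rho_0$. Then $\rho(x,t) = \rho_0(x - (1-\bar\rho)t)$ is an exact solution of the nonlocal LWR equation $\partial_t \rho + \partial_x\Big(\rho\,\big(1 - \int_0^\delta \rho(x+s,t)\, w_\delta(s)\,ds\big)\Big) = 0$; in particular the nonlocal velocity $u(x,t) = 1 - \frac{1}{\delta}\int_0^\delta \rho(x+s,t)\,ds$ is identically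 equal to $1 - \bar\rho$. -/
open Real Set MeasureTheory intervalIntegral

theorem stmt17 (m : ℕ) (hm : 0 < m) (δ : ℝ) (hδ : δ = 1 / m)
    (ρ₀ : ℝ → ℝ) (hρ₀ : ContDiff ℝ 1 ρ₀) (hper : Function.Periodic ρ₀ δ)
    (ρbar : ℝ) (hbar : ρbar = (1 / δ) * ∫ s in (0:ℝ)..δ, ρ₀ s)
    (ρ : ℝ → ℝ → ℝ) (hρ : ∀ x t, ρ x t = ρ₀ (x - (1 - ρbar) * t)) :
    (∀ x t : ℝ, 1 - (1 / δ) * ∫ s in (0:ℝ)..δ, ρ (x + s) t = 1 - ρbar) ∧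
    (∀ x t : ℝ,
      deriv (fun τ => ρ x τ) t +
        deriv (fun y => ρ y t * (1 - (1 / δ) * ∫ s in (0:ℝ)..δ, ρ (y + s) t)) x = 0) := by
  have key : ∀ a : ℝ, ∫ s in (0:ℝ)..δ, ρ₀ (a + s) = ∫ s in (0:ℝ)..δ, ρ₀ s := by
    intro a
    rw [intervalIntegral.integral_comp_add_left ρ₀ a]
    simpa using hper.intervalIntegral_add_eq a 0
  have hu : ∀ x t : ℝ, (1 / δ) * ∫ s in (0:ℝ)..δ, ρ (x + s) t = ρbar := by
    intro x t
    have h1 : (fun s => ρ (x + s) t) = fun s => ρ₀ ((x - (1 - ρbar) * t) + s) := by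
      funext s; rw [hρ]; ring_nf
    rw [h1, key, hbar]
  refine ⟨fun x t => by rw [hu], fun x t => ?_⟩
  set c := 1 - ρbar with hc
  have hd := hρ₀.differentiable one_ne_zero
  have h1 : deriv (fun τ => ρ x τ) t = deriv ρ₀ (x - c * t) * (-c) := by
    have he : (fun τ => ρ x τ) = fun τ => ρ₀ (x - c * τ) := by
      funext τ; rw [hρ]
    rw [he]
    have hin : HasDerivAt (fun τ : ℝ => x - c * τ) (-c) t := by
      simpa using (((hasDerivAt_id' t).const_mul c).const_sub x)
    exact ((hd (x - c * t)).hasDerivAt.comp t hin).deriv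
  have h2 : deriv (fun y => ρ y t * (1 - (1 / δ) * ∫ s in (0:ℝ)..δ, ρ (y + s) t)) x
      = deriv ρ₀ (x - c * t) * c := by
    have he : (fun y => ρ y t * (1 - (1 / δ) * ∫ s in (0:ℝ)..δ, ρ (y + s) t))
        = fun y => ρ₀ (y - c * t) * c := by
      funext y; rw [hρ, hu]
    rw [he]
    have hin : HasDerivAt (fun y : ℝ => y - c * t) 1 x := by
      simpa using (hasDerivAt_id' x).sub_const (c * t)
    have := (((hd (x - c * t)).hasDerivAt.comp x hin).mul_const c).deriv
    simpa using this
  rw [h1, h2]; ring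
end
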